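/- arXiv:1504.05925 — 5 statements merged into one kernel-verified Lean document; each statement's English description precedes it below -/
import Mathlib

section
/- Let 𝔤 be a finite-dimensional real Lie algebra whose Killing form B is negative definite, let 𝔨 ⊆ 𝔤 be a Lie subalgebra, and let 𝔪 be the B-orthogonal complement of 𝔨 (so 𝔤 = 𝔨 ⊕ 𝔪 as vector spaces). Then there exists an inner product on 𝔪 satisfying the cyclic condition if and only if [𝔪,𝔪] ⊆ 𝔨; moreover, in that case every inner product on 𝔪 satisfies the cyclic condition. -/
open scoped RealInnerProductSpace

/-- Key linear-algebra lemma: if `Φ` and `β` are two inner products on a finite-dimensional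
real vector space `V`, `F` is a bilinear map with `β (F x y) z` cyclic-invariant, and the
cyclic sum of `Φ (F · ·) ·` vanishes, then `F = 0`. -/
lemma aux_cyclic {V : Type*} [AddCommGroup V] [Module ℝ V] [FiniteDimensional ℝ V]
    (Φ β : V →ₗ[ℝ] V →ₗ[ℝ] ℝ)
    (hΦsym : ∀ x y, Φ x y = Φ y x) (hΦpos : ∀ x, x ≠ 0 → 0 < Φ x x)
    (hβsym : ∀ x y, β x y = β y x) (hβpos : ∀ x, x ≠ 0 → 0 < β x x)
    (F : V →ₗ[ℝ] V →ₗ[ℝ] V)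
    (hβcyc : ∀ x y z, β (F x y) z = β (F y z) x)
    (hΦcyc : ∀ x y z, Φ (F x y) z + Φ (F y z) x + Φ (F z x) y = 0) :
    F = 0 := by
  letI core : InnerProductSpace.Core ℝ V :=
    { inner := fun x y => Φ x y
      conj_inner_symm := fun x y => by simpa using hΦsym y x
      re_inner_nonneg := by
        intro x
        rcases eq_or_ne x 0 with h | h
        · simp [h]
        · simpa using (hΦpos x h).le
      definite := fun x hx => by
        by_contra h
        exact (hΦpos x h).ne' (by simpa using hx)
      add_left := fun x y z => by simp
      smul_left := fun x y r => by simp }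
  letI : NormedAddCommGroup V := core.toNormedAddCommGroup
  letI : InnerProductSpace ℝ V := InnerProductSpace.ofCore core.toCore
  have hinner : ∀ x y : V, ⟪x, y⟫ = Φ x y := fun _ _ => rfl
  haveI : CompleteSpace V := FiniteDimensional.complete ℝ V
  set Sf : V → V := fun u =>
    (InnerProductSpace.toDual ℝ V).symm (LinearMap.toContinuousLinearMap (β u)) with hSf
  have hS : ∀ u v, ⟪Sf u, v⟫ = β u v := by
    intro u v
    rw [hSf]
    simp [InnerProductSpace.toDual_symm_apply]
  have hadd : ∀ u u', Sf (u + u') = Sf u + Sf u' := by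
    intro u u'
    apply ext_inner_right ℝ
    intro v
    rw [inner_add_left, hS, hS, hS, map_add, LinearMap.add_apply]
  have hsmul : ∀ (r : ℝ) u, Sf (r • u) = r • Sf u := by
    intro r u
    apply ext_inner_right ℝ
    intro v
    rw [real_inner_smul_left, hS, hS, map_smul, LinearMap.smul_apply, smul_eq_mul]
  let S : V →ₗ[ℝ] V := ⟨⟨Sf, hadd⟩, hsmul⟩
  have hSapp : ∀ u, S u = Sf u := fun _ => rfl
  have hSsymm : S.IsSymmetric := by
    intro u v
    rw [hSapp, hS, hβsym, ← hS v u, real_inner_comm, hSapp]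
  set n := Module.finrank ℝ V with hn'
  have hn : Module.finrank ℝ V = n := rfl
  set e := hSsymm.eigenvectorBasis hn with he
  set μ := hSsymm.eigenvalues hn with hμdef
  have heig : ∀ i, S (e i) = μ i • e i := fun i => hSsymm.apply_eigenvectorBasis hn i
  have hone : ∀ i, ⟪e i, e i⟫ = 1 := by
    intro i
    have := e.orthonormal.1 i
    rw [real_inner_self_eq_norm_sq, this, one_pow]
  have he0 : ∀ i, e i ≠ 0 := fun i => e.orthonormal.ne_zero i
  have hμpos : ∀ i, 0 < μ i := by
    intro i
    have h1 : β (e i) (e i) = μ i := by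
      rw [← hS (e i) (e i), ← hSapp, heig, real_inner_smul_left, hone, mul_one]
    have := hβpos (e i) (he0 i)
    rw [h1] at this
    exact this
  have hbc : ∀ (w : V) k, β w (e k) = μ k * Φ w (e k) := by
    intro w k
    rw [hβsym, ← hS (e k) w, ← hSapp, heig, real_inner_smul_left, hinner, hΦsym]
  have key : ∀ i j, F (e i) (e j) = 0 := by
    intro i j
    have hc : ∀ k, Φ (F (e i) (e j)) (e k) = 0 := by
      intro k
      set c1 := Φ (F (e i) (e j)) (e k) with hc1
      set c2 := Φ (F (e j) (e k)) (e i) with hc2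
      set c3 := Φ (F (e k) (e i)) (e j) with hc3
      have hsum : c1 + c2 + c3 = 0 := hΦcyc _ _ _
      have eq1 : μ k * c1 = μ i * c2 := by
        rw [hc1, hc2, ← hbc, ← hbc, hβcyc]
      have eq2 : μ k * c1 = μ j * c3 := by
        rw [hc1, hc3, ← hbc, ← hbc, hβcyc, hβcyc]
      have hfac : c1 * (μ i * μ j + μ j * μ k + μ i * μ k) = 0 := by
        linear_combination (μ i * μ j) * hsum + μ j * eq1 + μ i * eq2
      have hpos : 0 < μ i * μ j + μ j * μ k + μ i * μ k := by
        have := hμpos i; have := hμpos j; have := hμpos k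
        positivity
      exact (mul_eq_zero.mp hfac).resolve_right hpos.ne'
    have h0 : e.repr (F (e i) (e j)) = 0 := by
      ext k
      rw [OrthonormalBasis.repr_apply_apply, real_inner_comm]
      simpa [hinner] using hc k
    exact (map_eq_zero_iff e.repr e.repr.injective).mp h0
  refine e.toBasis.ext fun i => e.toBasis.ext fun j => ?_
  simpa using key i j

/-- For a finite-dimensional real Lie algebra `L` with negative definite
Killing form `B`, a Lie subalgebra `K` and `m` the `B`-orthogonal complement of `K`
(so that `L = K ⊕ m` as vector spaces), there exists an inner product on `m`
satisfying the cyclic condition iff `[m,m] ⊆ K`; and in that case every inner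
product on `m` satisfies the cyclic condition. -/
theorem stmt_0
    (L : Type*) [LieRing L] [LieAlgebra ℝ L] [FiniteDimensional ℝ L]
    (hB : ∀ x : L, x ≠ 0 → killingForm ℝ L x x < 0)
    (K : LieSubalgebra ℝ L) (m : Submodule ℝ L)
    (hm : ∀ y : L, y ∈ m ↔ ∀ x ∈ K, killingForm ℝ L x y = 0)
    (hcompl : IsCompl K.toSubmodule m) :
    ((∃ Φ : ↥m →ₗ[ℝ] ↥m →ₗ[ℝ] ℝ,
        (∀ x y : ↥m, Φ x y = Φ y x) ∧ (∀ x : ↥m, x ≠ 0 → 0 < Φ x x) ∧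
        (∀ X Y Z : ↥m,
          Φ (Submodule.linearProjOfIsCompl m K.toSubmodule hcompl.symm ⁅(X : L), (Y : L)⁆) Z
          + Φ (Submodule.linearProjOfIsCompl m K.toSubmodule hcompl.symm ⁅(Y : L), (Z : L)⁆) X
          + Φ (Submodule.linearProjOfIsCompl m K.toSubmodule hcompl.symm ⁅(Z : L), (X : L)⁆) Y
          = 0))
      ↔ (∀ x ∈ m, ∀ y ∈ m, ⁅x, y⁆ ∈ K))
    ∧ ((∀ x ∈ m, ∀ y ∈ m, ⁅x, y⁆ ∈ K) →
        ∀ Φ : ↥m →ₗ[ℝ] ↥m →ₗ[ℝ] ℝ,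
          (∀ x y : ↥m, Φ x y = Φ y x) → (∀ x : ↥m, x ≠ 0 → 0 < Φ x x) →
          (∀ X Y Z : ↥m,
            Φ (Submodule.linearProjOfIsCompl m K.toSubmodule hcompl.symm ⁅(X : L), (Y : L)⁆) Z
            + Φ (Submodule.linearProjOfIsCompl m K.toSubmodule hcompl.symm ⁅(Y : L), (Z : L)⁆) X
            + Φ (Submodule.linearProjOfIsCompl m K.toSubmodule hcompl.symm ⁅(Z : L), (X : L)⁆) Y
            = 0)) := by
  set B := killingForm ℝ L with hBdef
  set P := Submodule.linearProjOfIsCompl m K.toSubmodule hcompl.symm with hPdef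
  -- If [m,m] ⊆ K then the projections vanish, so the cyclic condition is trivial.
  have hP0 : (∀ x ∈ m, ∀ y ∈ m, ⁅x, y⁆ ∈ K) →
      ∀ X Y : ↥m, P ⁅(X : L), (Y : L)⁆ = 0 := by
    intro h X Y
    exact (Submodule.linearProjOfIsCompl_apply_eq_zero_iff hcompl.symm).2
      (K.mem_toSubmodule.2 (h X X.2 Y Y.2))
  -- basic B facts
  have hK0 : ∀ k ∈ K, ∀ z : ↥m, B k (z : L) = 0 := fun k hk z => ((hm z).mp z.2) k hk
  have hPsplit : ∀ v : L, v - (P v : L) ∈ K.toSubmodule := by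
    intro v
    rw [← Submodule.linearProjOfIsCompl_apply_eq_zero_iff hcompl.symm]
    rw [map_sub, Submodule.linearProjOfIsCompl_apply_left]
    exact sub_self _
  have hBP : ∀ (v : L) (z : ↥m), B (P v : L) z = B v z := by
    intro v z
    have h1 := hK0 _ (K.mem_toSubmodule.1 (hPsplit v)) z
    rw [map_sub, LinearMap.sub_apply, sub_eq_zero] at h1
    exact h1.symm
  -- the restricted negative Killing form
  set βf : ↥m →ₗ[ℝ] ↥m →ₗ[ℝ] ℝ := -(B.compl₁₂ m.subtype m.subtype) with hβf
  have hβapp : ∀ x y : ↥m, βf x y = -(B x y) := fun x y => rfl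
  have hβsym : ∀ x y : ↥m, βf x y = βf y x := by
    intro x y
    rw [hβapp, hβapp, LieModule.traceForm_comm]
  have hβpos : ∀ x : ↥m, x ≠ 0 → 0 < βf x x := by
    intro x hx
    have : (x : L) ≠ 0 := fun h => hx (Subtype.coe_injective h)
    have := hB x this
    rw [hβapp]
    linarith
  -- the projected bracket as a bilinear map
  set F : ↥m →ₗ[ℝ] ↥m →ₗ[ℝ] ↥m := LinearMap.mk₂ ℝ (fun x y => P ⁅(x : L), (y : L)⁆)
    (fun x x' y => by simp [add_lie])
    (fun r x y => by simp [smul_lie])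
    (fun x y y' => by simp [lie_add])
    (fun r x y => by simp [lie_smul]) with hF
  have hFapp : ∀ x y : ↥m, F x y = P ⁅(x : L), (y : L)⁆ := fun x y => rfl
  have hβcyc : ∀ x y z : ↥m, βf (F x y) z = βf (F y z) x := by
    intro x y z
    rw [hFapp, hFapp, hβapp, hβapp, hBP, hBP, hBdef,
      LieModule.traceForm_apply_lie_apply, ← LieModule.traceForm_comm]
  constructor
  · constructor
    · rintro ⟨Φ, hsym, hpos, hcyc⟩ x hx y hy
      have hF0 : F = 0 := by
        refine aux_cyclic Φ βf hsym hpos hβsym hβpos F hβcyc ?_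
        intro X Y Z
        rw [hFapp, hFapp, hFapp]
        exact hcyc X Y Z
      have : P ⁅x, y⁆ = 0 := by
        have := hFapp ⟨x, hx⟩ ⟨y, hy⟩
        rw [hF0] at this
        simpa using this.symm
      exact K.mem_toSubmodule.1
        ((Submodule.linearProjOfIsCompl_apply_eq_zero_iff hcompl.symm).1 this)
    · intro h
      refine ⟨βf, hβsym, hβpos, ?_⟩
      intro X Y Z
      rw [hP0 h X Y, hP0 h Y Z, hP0 h Z X]
      simp
  · intro h Φ hsym hpos X Y Z
    rw [hP0 h X Y, hP0 h Y Z, hP0 h Z X]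
    simp
end

section
/- Let 𝔤 be a finite-dimensional real Lie algebra with Killing form B, let 𝔨 ⊆ 𝔤 be a Lie subalgebra and 𝔪 a vector subspace with 𝔤 = 𝔨 ⊕ 𝔪 and B(𝔨,𝔪) = 0. Suppose 𝔪 = 𝔪₁ ⊕ ⋯ ⊕ 𝔪_N with B(𝔪_a,𝔪_b) = 0 for a ≠ b, and let λ₁,…,λ_N be nonzero real numbers such that the symmetric bilinear form ⟨x,y⟩ := Σ_a λ_a B(x_a,y_a) (where x_a denotes the 𝔪_a-component of x) is positive definite on 𝔪. Then ⟨·,·⟩ satisfies the cyclic condition if and only if for all indices a,b,c and all x ∈ 𝔪_a, y ∈ 𝔪_b, z ∈ 𝔪_c one has (λ_a + λ_b + λ_c)·B([x,y],z) = 0. -/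
/-- The diagonal symmetric bilinear form `⟨x,y⟩ = ∑ a, λ a * B (x_a) (y_a)`, where
`x_a = proj a x` is the `𝔪_a`-component of `x` and `B` is the Killing form. -/
noncomputable def diagKillingForm {L : Type*} [LieRing L] [LieAlgebra ℝ L]
    {N : ℕ} (proj : Fin N → (L →ₗ[ℝ] L)) (lam : Fin N → ℝ) (x y : L) : ℝ :=
  ∑ a, lam a * killingForm ℝ L (proj a x) (proj a y)

/-- The diagonal form as a genuine bilinear map. -/
noncomputable def diagForm {L : Type*} [LieRing L] [LieAlgebra ℝ L]
    {N : ℕ} (proj : Fin N → (L →ₗ[ℝ] L)) (lam : Fin N → ℝ) : L →ₗ[ℝ] L →ₗ[ℝ] ℝ :=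
  ∑ a, lam a • (killingForm ℝ L).compl₁₂ (proj a) (proj a)

lemma diagKillingForm_eq {L : Type*} [LieRing L] [LieAlgebra ℝ L]
    {N : ℕ} (proj : Fin N → (L →ₗ[ℝ] L)) (lam : Fin N → ℝ) (x y : L) :
    diagKillingForm proj lam x y = diagForm proj lam x y := by
  simp [diagKillingForm, diagForm, LinearMap.sum_apply, LinearMap.compl₁₂_apply]


/-- criterion `(λ_a + λ_b + λ_c) · B([x,y],z) = 0` for the diagonal
metric `⟨x,y⟩ = ∑ λ_a B(x_a, y_a)` on `𝔪 = 𝔪₁ ⊕ ⋯ ⊕ 𝔪_N` to satisfy the cyclic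
condition (Proposition 4.2 of the paper). -/
theorem stmt_1
    (L : Type*) [LieRing L] [LieAlgebra ℝ L] [FiniteDimensional ℝ L]
    (K : LieSubalgebra ℝ L) (m : Submodule ℝ L)
    (hkm : ∀ x ∈ K, ∀ y ∈ m, killingForm ℝ L x y = 0)
    (hcompl : IsCompl K.toSubmodule m)
    (N : ℕ) (ms : Fin N → Submodule ℝ L)
    (hms : ∀ a, ms a ≤ m)
    (horth : ∀ a b, a ≠ b → ∀ x ∈ ms a, ∀ y ∈ ms b, killingForm ℝ L x y = 0)
    (proj : Fin N → (L →ₗ[ℝ] L))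
    (hproj_mem : ∀ a (x : L), proj a x ∈ ms a)
    (hproj_id : ∀ a, ∀ x ∈ ms a, proj a x = x)
    (hproj_zero : ∀ a b, a ≠ b → ∀ x ∈ ms b, proj a x = 0)
    (hdecomp : ∀ x ∈ m, x = ∑ a, proj a x)
    (lam : Fin N → ℝ) (hlam : ∀ a, lam a ≠ 0)
    (hpos : ∀ x ∈ m, x ≠ 0 → 0 < diagKillingForm proj lam x x) :
    (∀ X ∈ m, ∀ Y ∈ m, ∀ Z ∈ m,
        diagKillingForm proj lam
          ((Submodule.linearProjOfIsCompl m K.toSubmodule hcompl.symm ⁅X, Y⁆ : L)) Z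
        + diagKillingForm proj lam
          ((Submodule.linearProjOfIsCompl m K.toSubmodule hcompl.symm ⁅Y, Z⁆ : L)) X
        + diagKillingForm proj lam
          ((Submodule.linearProjOfIsCompl m K.toSubmodule hcompl.symm ⁅Z, X⁆ : L)) Y = 0)
      ↔ (∀ a b c, ∀ x ∈ ms a, ∀ y ∈ ms b, ∀ z ∈ ms c,
          (lam a + lam b + lam c) * killingForm ℝ L ⁅x, y⁆ z = 0) := by
  set P := Submodule.linearProjOfIsCompl m K.toSubmodule hcompl.symm with hP
  -- key evaluation lemma
  have key : ∀ c, ∀ z ∈ ms c, ∀ u : L,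
      diagForm proj lam (P u : L) z = lam c * killingForm ℝ L u z := by
    intro c z hz u
    have h1 : diagForm proj lam (P u : L) z
        = lam c * killingForm ℝ L (proj c (P u : L)) z := by
      simp only [diagForm, LinearMap.sum_apply, LinearMap.smul_apply,
        LinearMap.compl₁₂_apply, smul_eq_mul]
      rw [Finset.sum_eq_single c]
      · rw [hproj_id c z hz]
      · intro d _ hdc
        rw [hproj_zero d c hdc z hz]; simp
      · simp
    have h2 : killingForm ℝ L (proj c (P u : L)) z = killingForm ℝ L (P u : L) z := by
      have hPm : (P u : L) ∈ m := (P u).2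
      conv_rhs => rw [hdecomp (P u : L) hPm]
      rw [map_sum, LinearMap.sum_apply]
      rw [Finset.sum_eq_single c]
      · intro d _ hdc
        exact horth d c hdc _ (hproj_mem d _) z hz
      · simp
    have h3 : killingForm ℝ L (P u : L) z = killingForm ℝ L u z := by
      have hd : (P u : L) + (Submodule.linearProjOfIsCompl K.toSubmodule m hcompl.symm.symm u : L) = u :=
        Submodule.projection_add_projection_eq_self hcompl.symm u
      have hK : (Submodule.linearProjOfIsCompl K.toSubmodule m hcompl.symm.symm u : L) ∈ K :=
        (Submodule.linearProjOfIsCompl K.toSubmodule m hcompl.symm.symm u).2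
      conv_rhs => rw [← hd]
      rw [map_add, LinearMap.add_apply, hkm _ hK z (hms c hz), add_zero]
    rw [h1, h2, h3]
  -- cyclic identity for the Killing form
  have cyc1 : ∀ x y z : L, killingForm ℝ L ⁅x, y⁆ z = killingForm ℝ L ⁅y, z⁆ x := by
    intro x y z
    rw [LieModule.traceForm_apply_lie_apply]
    exact LieModule.traceForm_comm ℝ L L x ⁅y, z⁆
  -- per-component formula
  have Fcomp : ∀ a b c, ∀ x ∈ ms a, ∀ y ∈ ms b, ∀ z ∈ ms c,
      diagForm proj lam (P ⁅x, y⁆ : L) z + diagForm proj lam (P ⁅y, z⁆ : L) x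
        + diagForm proj lam (P ⁅z, x⁆ : L) y
      = (lam a + lam b + lam c) * killingForm ℝ L ⁅x, y⁆ z := by
    intro a b c x hx y hy z hz
    rw [key c z hz, key a x hx, key b y hy, cyc1 z x y, ← cyc1 x y z]
    ring
  simp only [diagKillingForm_eq]
  constructor
  · intro H a b c x hx y hy z hz
    rw [← Fcomp a b c x hx y hy z hz]
    exact H x (hms a hx) y (hms b hy) z (hms c hz)
  · intro h X hX Y hY Z hZ
    obtain ⟨xa, hxa, rfl⟩ : ∃ xa : Fin N → L, (∀ a, xa a ∈ ms a) ∧ X = ∑ a, xa a :=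
      ⟨fun a => proj a X, fun a => hproj_mem a X, hdecomp X hX⟩
    obtain ⟨yb, hyb, rfl⟩ : ∃ yb : Fin N → L, (∀ a, yb a ∈ ms a) ∧ Y = ∑ a, yb a :=
      ⟨fun a => proj a Y, fun a => hproj_mem a Y, hdecomp Y hY⟩
    obtain ⟨zc, hzc, rfl⟩ : ∃ zc : Fin N → L, (∀ a, zc a ∈ ms a) ∧ Z = ∑ a, zc a :=
      ⟨fun a => proj a Z, fun a => hproj_mem a Z, hdecomp Z hZ⟩
    have lie_sum' : ∀ (u : L) (f : Fin N → L), ⁅u, ∑ a, f a⁆ = ∑ a, ⁅u, f a⁆ := by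
      intro u f
      calc ⁅u, ∑ a, f a⁆ = LieAlgebra.ad ℝ L u (∑ a, f a) :=
            (LieAlgebra.ad_apply (R := ℝ) (L := L) u (∑ a, f a)).symm
        _ = ∑ a, LieAlgebra.ad ℝ L u (f a) := map_sum _ f Finset.univ
        _ = ∑ a, ⁅u, f a⁆ := Finset.sum_congr rfl fun a _ => LieAlgebra.ad_apply (R := ℝ) (L := L) u (f a)
    have sum_lie' : ∀ (f : Fin N → L) (u : L), ⁅∑ a, f a, u⁆ = ∑ a, ⁅f a, u⁆ := by
      intro f u
      letI : LieRing (Module.End ℝ L) := LieRing.ofAssociativeRing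
      letI : LieAlgebra ℝ (Module.End ℝ L) := LieAlgebra.ofAssociativeAlgebra
      have h0 := LinearMap.congr_fun
        (map_sum (LieAlgebra.ad ℝ L).toLinearMap f Finset.univ) u
      simp only [LieHom.coe_toLinearMap, LinearMap.sum_apply,
        LieAlgebra.ad_apply] at h0
      exact h0
    simp only [sum_lie', lie_sum', map_sum, Submodule.coe_sum, LinearMap.sum_apply]
    have rot : ∀ (f : Fin N → Fin N → Fin N → ℝ),
        (∑ i, ∑ j, ∑ k, f i j k) = ∑ j, ∑ k, ∑ i, f i j k := by
      intro f
      rw [Finset.sum_comm]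
      exact Finset.sum_congr rfl fun j _ => Finset.sum_comm
    rw [rot (fun i j k => ((diagForm proj lam) (P ⁅xa j, yb k⁆ : L)) (zc i))]
    rw [rot (fun i j k => ((diagForm proj lam) (P ⁅zc j, xa k⁆ : L)) (yb i))]
    rw [rot (fun i j k => ((diagForm proj lam) (P ⁅zc i, xa j⁆ : L)) (yb k))]
    rw [← Finset.sum_add_distrib, ← Finset.sum_add_distrib]
    refine Finset.sum_eq_zero fun a _ => ?_
    rw [← Finset.sum_add_distrib, ← Finset.sum_add_distrib]
    refine Finset.sum_eq_zero fun b _ => ?_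
    rw [← Finset.sum_add_distrib, ← Finset.sum_add_distrib]
    refine Finset.sum_eq_zero fun c _ => ?_
    rw [Fcomp a b c _ (hxa a) _ (hyb b) _ (hzc c)]
    exact h a b c _ (hxa a) _ (hyb b) _ (hzc c)
end

section
/- Let 𝔤 be a finite-dimensional real Lie algebra with Killing form B. Let 𝔩 ⊆ 𝔤 be a Lie subalgebra on which B is negative definite, let 𝔭 be the B-orthogonal complement of 𝔩 in 𝔤, and assume B is positive definite on 𝔭, [𝔩,𝔭] ⊆ 𝔭 and [𝔭,𝔭] ⊆ 𝔩 (a Cartan decomposition). Let 𝔨 ⊆ 𝔩 be a Lie subalgebra, let 𝔣 be the B-orthogonal complement of 𝔨 in 𝔩, and set 𝔪 = 𝔣 ⊕ 𝔭, so that 𝔤 = 𝔨 ⊕ 𝔪. Then there exists an inner product ⟨·,·⟩ on 𝔪 with ⟨𝔣,𝔭⟩ = 0 which is ad(𝔨)-invariant (i.e., ⟨[k,x],y⟩ + ⟨x,[k,y]⟩ = 0 for all k ∈ 𝔨 and x,y ∈ 𝔪) and satisfies the cyclic condition, if and only if [𝔣,𝔣] ⊆ 𝔨. -/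
private lemma sum_cyc0 {n : ℕ} (G : Fin n → Fin n → Fin n → ℝ) :
    (∑ i, ∑ j, ∑ k, G i j k) = ∑ i, ∑ j, ∑ k, G j k i := by
  calc (∑ i, ∑ j, ∑ k, G i j k) = ∑ i, ∑ k, ∑ j, G i j k :=
        Finset.sum_congr rfl fun i _ => Finset.sum_comm
    _ = ∑ k, ∑ i, ∑ j, G i j k := Finset.sum_comm

private lemma sum_cyc {n : ℕ} (G : Fin n → Fin n → Fin n → ℝ) :
    (∑ i, ∑ j, ∑ k, G i j k) = ∑ i, ∑ j, ∑ k, G j k i := sum_cyc0 G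

private lemma sum_cyc2 {n : ℕ} (G : Fin n → Fin n → Fin n → ℝ) :
    (∑ i, ∑ j, ∑ k, G i j k) = ∑ i, ∑ j, ∑ k, G k i j :=
  (sum_cyc G).trans (sum_cyc0 fun i j k => G j k i)

private lemma sum_lie' {L : Type*} [LieRing L] {ι : Type*} (s : Finset ι)
    (g : ι → L) (Y : L) : ⁅∑ i ∈ s, g i, Y⁆ = ∑ i ∈ s, ⁅g i, Y⁆ := by
  induction s using Finset.cons_induction with
  | empty => simp
  | cons i s his ih => rw [Finset.sum_cons, Finset.sum_cons, add_lie, ih]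

private lemma lie_sum' {L : Type*} [LieRing L] {ι : Type*} (s : Finset ι)
    (g : ι → L) (Y : L) : ⁅Y, ∑ i ∈ s, g i⁆ = ∑ i ∈ s, ⁅Y, g i⁆ := by
  induction s using Finset.cons_induction with
  | empty => simp
  | cons i s his ih => rw [Finset.sum_cons, Finset.sum_cons, lie_add, ih]

set_option maxHeartbeats 2000000 in
/-- For a Cartan decomposition `𝔤 = 𝔩 ⊕ 𝔭` (Killing form `B` negative
definite on the subalgebra `𝔩`, positive definite on its `B`-orthogonal complement
`𝔭`, with `[𝔩,𝔭] ⊆ 𝔭`, `[𝔭,𝔭] ⊆ 𝔩`), a subalgebra `𝔨 ⊆ 𝔩` with `𝔣` the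
`B`-orthogonal complement of `𝔨` in `𝔩`, and `𝔪 = 𝔣 ⊕ 𝔭`: there exists an
`ad(𝔨)`-invariant inner product on `𝔪` with `⟨𝔣,𝔭⟩ = 0` satisfying the cyclic
condition iff `[𝔣,𝔣] ⊆ 𝔨` (Proposition 4.3 of the paper). -/
theorem stmt_2
    (L : Type*) [LieRing L] [LieAlgebra ℝ L] [FiniteDimensional ℝ L]
    (l : LieSubalgebra ℝ L)
    (hlneg : ∀ x ∈ l, x ≠ 0 → killingForm ℝ L x x < 0)
    (p : Submodule ℝ L)
    (hp : ∀ y : L, y ∈ p ↔ ∀ x ∈ l, killingForm ℝ L x y = 0)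
    (hppos : ∀ x ∈ p, x ≠ 0 → 0 < killingForm ℝ L x x)
    (hlp : ∀ x ∈ l, ∀ y ∈ p, ⁅x, y⁆ ∈ p)
    (hpp : ∀ x ∈ p, ∀ y ∈ p, ⁅x, y⁆ ∈ l)
    (k : LieSubalgebra ℝ L) (hkl : k ≤ l)
    (f : Submodule ℝ L)
    (hf : ∀ y : L, y ∈ f ↔ (y ∈ l ∧ ∀ x ∈ k, killingForm ℝ L x y = 0))
    (hcompl : IsCompl k.toSubmodule (f ⊔ p)) :
    (∃ Φ : ↥(f ⊔ p) →ₗ[ℝ] ↥(f ⊔ p) →ₗ[ℝ] ℝ,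
        (∀ x y : ↥(f ⊔ p), Φ x y = Φ y x) ∧
        (∀ x : ↥(f ⊔ p), x ≠ 0 → 0 < Φ x x) ∧
        (∀ x y : ↥(f ⊔ p), (x : L) ∈ f → (y : L) ∈ p → Φ x y = 0) ∧
        (∀ c ∈ k, ∀ x y : ↥(f ⊔ p),
          ∀ (hx : ⁅c, (x : L)⁆ ∈ f ⊔ p) (hy : ⁅c, (y : L)⁆ ∈ f ⊔ p),
            Φ ⟨⁅c, (x : L)⁆, hx⟩ y + Φ x ⟨⁅c, (y : L)⁆, hy⟩ = 0) ∧
        (∀ X Y Z : ↥(f ⊔ p),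
          Φ (Submodule.linearProjOfIsCompl (f ⊔ p) k.toSubmodule hcompl.symm
              ⁅(X : L), (Y : L)⁆) Z
          + Φ (Submodule.linearProjOfIsCompl (f ⊔ p) k.toSubmodule hcompl.symm
              ⁅(Y : L), (Z : L)⁆) X
          + Φ (Submodule.linearProjOfIsCompl (f ⊔ p) k.toSubmodule hcompl.symm
              ⁅(Z : L), (X : L)⁆) Y = 0))
      ↔ (∀ x ∈ f, ∀ y ∈ f, ⁅x, y⁆ ∈ k) := by
  classical
  set B : L →ₗ[ℝ] L →ₗ[ℝ] ℝ := killingForm ℝ L with hBdef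
  set q : L →ₗ[ℝ] ↥(f ⊔ p) :=
    Submodule.linearProjOfIsCompl (f ⊔ p) k.toSubmodule hcompl.symm with hqdef
  have Bsymm : ∀ u v : L, B u v = B v u := fun u v => LieModule.traceForm_comm ℝ L L u v
  have Binv : ∀ u v w : L, B ⁅u, v⁆ w = B u ⁅v, w⁆ := fun u v w =>
    LieModule.traceForm_apply_lie_apply ℝ L L u v w
  have Bskew : ∀ u v w : L, B ⁅u, v⁆ w = - B v ⁅u, w⁆ := fun u v w =>
    LieModule.traceForm_apply_lie_apply' ℝ L L u v w
  have hfl : ∀ y ∈ f, y ∈ l := fun y hy => ((hf y).mp hy).1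
  have hBkf : ∀ c ∈ k, ∀ w ∈ f, B c w = 0 := fun c hc w hw => ((hf w).mp hw).2 c hc
  have hBlp : ∀ u ∈ l, ∀ w ∈ p, B u w = 0 := fun u hu w hw => (hp w).mp hw u hu
  have hpl0 : ∀ u ∈ p, u ∈ l → u = 0 := by
    intro u hup hul
    by_contra hne
    exact absurd (hBlp u hul u hup) (ne_of_gt (hppos u hup hne))
  have hml : ∀ u ∈ f ⊔ p, u ∈ l → u ∈ f := by
    intro u hu hul
    obtain ⟨s, hs, t, ht, hst⟩ := Submodule.mem_sup.mp hu
    have htl : t ∈ l := by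
      have ht' : t = u - s := by rw [← hst]; abel
      rw [ht']
      exact sub_mem hul (hfl s hs)
    have ht0 : t = 0 := hpl0 t ht htl
    rw [← hst, ht0, add_zero]
    exact hs
  have hfp0 : ∀ u ∈ f, u ∈ p → u = 0 := fun u huf hup => hpl0 u hup (hfl u huf)
  have hkf_f : ∀ c ∈ k, ∀ w ∈ f, ⁅c, w⁆ ∈ f := by
    intro c hc w hw
    rw [hf]
    refine ⟨l.lie_mem (hkl hc) (hfl w hw), fun x hx => ?_⟩
    rw [← Binv x c w]
    exact hBkf _ (k.lie_mem hx hc) w hw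
  -- projection facts
  have hq_add : ∀ w : L,
      ((k.toSubmodule.linearProjOfIsCompl (f ⊔ p) hcompl w : L) + (q w : L)) = w :=
    fun w => Submodule.projection_add_projection_eq_self hcompl w
  have hq_k : ∀ w : L, w - (q w : L) ∈ k := by
    intro w
    have h := hq_add w
    have : w - (q w : L) = (k.toSubmodule.linearProjOfIsCompl (f ⊔ p) hcompl w : L) := by
      rw [sub_eq_iff_eq_add']; exact h.symm.trans (add_comm _ _)
    rw [this]
    exact (k.toSubmodule.linearProjOfIsCompl (f ⊔ p) hcompl w).2
  have hq_f : ∀ w ∈ l, (q w : L) ∈ f := by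
    intro w hw
    refine hml _ (q w).2 ?_
    have h2 : (q w : L) = w - (k.toSubmodule.linearProjOfIsCompl (f ⊔ p) hcompl w : L) := by
      rw [eq_sub_iff_add_eq']; exact hq_add w
    rw [h2]
    exact sub_mem hw (hkl (k.toSubmodule.linearProjOfIsCompl (f ⊔ p) hcompl w).2)
  have hq_mem : ∀ (w : L) (hw : w ∈ f ⊔ p), q w = ⟨w, hw⟩ := fun w hw =>
    Submodule.linearProjOfIsCompl_apply_left hcompl.symm ⟨w, hw⟩
  have hq_k0 : ∀ w ∈ k, q w = 0 := fun w hw =>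
    (Submodule.projectionOnto_apply_eq_zero_iff hcompl.symm).mpr hw
  have hBk_f : ∀ (w : L), (q w : L) ∈ f → ∀ z ∈ f, B w z = B (q w : L) z := by
    intro w hwf z hz
    have h : B (w - (q w : L)) z = 0 := hBkf _ (hq_k w) z hz
    rw [map_sub, LinearMap.sub_apply] at h
    linarith
  constructor
  · -- forward: existence of cyclic metric implies [f,f] ⊆ k
    rintro ⟨Φ, hsymm, hpos, -, -, hcyc⟩
    have hfle : f ≤ f ⊔ p := le_sup_left
    set ι : ↥f →ₗ[ℝ] ↥(f ⊔ p) := Submodule.inclusion hfle with hιdef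
    set Ψ : LinearMap.BilinForm ℝ ↥f := Φ.compl₁₂ ι ι with hΨdef
    have hΨapp : ∀ u v' : ↥f, Ψ u v' = Φ (ι u) (ι v') := fun u v' => rfl
    have hΨsymm : LinearMap.IsSymm Ψ := ⟨fun u v' => hsymm (ι u) (ι v')⟩
    have hΨpos : ∀ u : ↥f, u ≠ 0 → 0 < Ψ u u := by
      intro u hu
      refine hpos (ι u) fun hc => hu ?_
      have : ((ι u : ↥(f ⊔ p)) : L) = 0 := by rw [hc]; rfl
      exact Subtype.ext this
    obtain ⟨v, hv⟩ := LinearMap.BilinForm.exists_orthogonal_basis hΨsymm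
    set c : Fin (Module.finrank ℝ ↥f) → ℝ := fun i => Ψ (v i) (v i) with hcdef
    have hcpos : ∀ i, 0 < c i := fun i => hΨpos (v i) (v.ne_zero i)
    have hcne : ∀ i, c i ≠ 0 := fun i => ne_of_gt (hcpos i)
    have hrepr : ∀ (u : ↥f) (j : Fin (Module.finrank ℝ ↥f)), Ψ u (v j) = v.repr u j * c j := by
      intro u j
      conv_lhs => rw [← Module.Basis.sum_repr v u]
      rw [map_sum, LinearMap.sum_apply, Finset.sum_eq_single j]
      · rw [map_smul, LinearMap.smul_apply, smul_eq_mul]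
      · intro i _ hij
        rw [map_smul, LinearMap.smul_apply, smul_eq_mul, hv hij, mul_zero]
      · intro h
        exact absurd (Finset.mem_univ j) h
    have hexp : ∀ (u : ↥f) (w' : L),
        B w' (u : L) = ∑ j, v.repr u j * B w' ((v j : L)) := by
      intro u w'
      have h1 : ((u : L)) = ∑ j, v.repr u j • ((v j : L)) := by
        conv_lhs => rw [← Module.Basis.sum_repr v u]
        simp only [AddSubmonoidClass.coe_finset_sum, SetLike.val_smul]
      rw [h1, map_sum]
      exact Finset.sum_congr rfl fun j _ => by rw [map_smul, smul_eq_mul]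
    set w : Fin (Module.finrank ℝ ↥f) → Fin (Module.finrank ℝ ↥f) → L := fun i j => ⁅((v i : L)), ((v j : L))⁆ with hwdef
    have hw_l : ∀ i j, w i j ∈ l := fun i j => l.lie_mem (hfl _ (v i).2) (hfl _ (v j).2)
    set uL : Fin (Module.finrank ℝ ↥f) → Fin (Module.finrank ℝ ↥f) → L := fun i j => (q (w i j) : L) with huLdef
    have huf : ∀ i j, uL i j ∈ f := fun i j => hq_f _ (hw_l i j)
    set u' : Fin (Module.finrank ℝ ↥f) → Fin (Module.finrank ℝ ↥f) → ↥f := fun i j => ⟨uL i j, huf i j⟩ with hu'def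
    have hS : ∀ i j m : Fin (Module.finrank ℝ ↥f),
        Ψ (u' i j) (v m) + Ψ (u' j m) (v i) + Ψ (u' m i) (v j) = 0 := by
      intro i j m
      exact hcyc (ι (v i)) (ι (v j)) (ι (v m))
    have hτcyc : ∀ i j m : Fin (Module.finrank ℝ ↥f), B (w i j) ((v m : L)) = B (w j m) ((v i : L)) := by
      intro i j m
      show B ⁅((v i : L)), ((v j : L))⁆ ((v m : L)) = B ⁅((v j : L)), ((v m : L))⁆ ((v i : L))
      rw [Binv, Bsymm]
    set T : ℝ :=
      ∑ i, ∑ j, ∑ m, Ψ (u' i j) (v m) * B (w i j) ((v m : L)) / (c i * c j * c m)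
      with hTdef
    set T2 : ℝ :=
      ∑ i, ∑ j, ∑ m, Ψ (u' j m) (v i) * B (w i j) ((v m : L)) / (c i * c j * c m)
      with hT2def
    set T3 : ℝ :=
      ∑ i, ∑ j, ∑ m, Ψ (u' m i) (v j) * B (w i j) ((v m : L)) / (c i * c j * c m)
      with hT3def
    have h0 : T + T2 + T3 = 0 := by
      rw [hTdef, hT2def, hT3def]
      simp only [← Finset.sum_add_distrib]
      calc (∑ i, ∑ j, ∑ m,
            (Ψ (u' i j) (v m) * B (w i j) ((v m : L)) / (c i * c j * c m)
            + Ψ (u' j m) (v i) * B (w i j) ((v m : L)) / (c i * c j * c m)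
            + Ψ (u' m i) (v j) * B (w i j) ((v m : L)) / (c i * c j * c m)))
          = ∑ i, ∑ j, ∑ m,
            ((Ψ (u' i j) (v m) + Ψ (u' j m) (v i) + Ψ (u' m i) (v j))
              * B (w i j) ((v m : L)) / (c i * c j * c m)) := by
            refine Finset.sum_congr rfl fun i _ => Finset.sum_congr rfl fun j _ =>
              Finset.sum_congr rfl fun m _ => ?_
            ring
        _ = 0 := by
            refine Finset.sum_eq_zero fun i _ => Finset.sum_eq_zero fun j _ =>
              Finset.sum_eq_zero fun m _ => ?_
            rw [hS i j m, zero_mul, zero_div]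
    have hT2T : T2 = T := by
      rw [hT2def]
      have := sum_cyc (fun x y z =>
        Ψ (u' x y) (v z) * B (w z x) ((v y : L)) / (c z * c x * c y))
      rw [← this, hTdef]
      refine Finset.sum_congr rfl fun i _ => Finset.sum_congr rfl fun j _ =>
        Finset.sum_congr rfl fun m _ => ?_
      rw [hτcyc m i j]
      ring
    have hT3T : T3 = T := by
      rw [hT3def]
      have := sum_cyc2 (fun x y z =>
        Ψ (u' x y) (v z) * B (w y z) ((v x : L)) / (c y * c z * c x))
      rw [← this, hTdef]
      refine Finset.sum_congr rfl fun i _ => Finset.sum_congr rfl fun j _ =>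
        Finset.sum_congr rfl fun m _ => ?_
      rw [← hτcyc i j m]
      ring
    have hTzero : T = 0 := by
      rw [hT2T, hT3T] at h0
      linarith
    have hTval : T = ∑ i, ∑ j, (1 / (c i * c j)) * B (uL i j) (uL i j) := by
      rw [hTdef]
      refine Finset.sum_congr rfl fun i _ => Finset.sum_congr rfl fun j _ => ?_
      have e1 : B (w i j) (uL i j) = B (uL i j) (uL i j) := by
        have := hBk_f (w i j) (huf i j) (uL i j) (huf i j)
        exact this
      calc (∑ m, Ψ (u' i j) (v m) * B (w i j) ((v m : L)) / (c i * c j * c m))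
          = ∑ m, (1 / (c i * c j)) * (v.repr (u' i j) m * B (w i j) ((v m : L))) := by
            refine Finset.sum_congr rfl fun m _ => ?_
            rw [hrepr]
            have hm := hcne m
            have hi := hcne i
            have hj := hcne j
            field_simp
        _ = (1 / (c i * c j)) * B (w i j) ((u' i j : L)) := by
            rw [← Finset.mul_sum, ← hexp]
        _ = (1 / (c i * c j)) * B (uL i j) (uL i j) := by rw [← e1]
    have hterm_nonpos : ∀ i j, (1 / (c i * c j)) * B (uL i j) (uL i j) ≤ 0 := by
      intro i j
      have h1 : 0 < 1 / (c i * c j) := by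
        have := hcpos i
        have := hcpos j
        positivity
      have h2 : B (uL i j) (uL i j) ≤ 0 := by
        rcases eq_or_ne (uL i j) 0 with h | h
        · rw [h]; simp
        · exact le_of_lt (hlneg _ (hfl _ (huf i j)) h)
      exact mul_nonpos_of_nonneg_of_nonpos (le_of_lt h1) h2
    have hsum0 : (∑ i, ∑ j, (1 / (c i * c j)) * B (uL i j) (uL i j)) = 0 := by
      rw [← hTval]
      exact hTzero
    have huL0 : ∀ i j, uL i j = 0 := by
      intro i j
      have hout := (Finset.sum_eq_zero_iff_of_nonpos
        (fun i _ => Finset.sum_nonpos (fun j _ => hterm_nonpos i j))).mp hsum0 i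
        (Finset.mem_univ i)
      have hin := (Finset.sum_eq_zero_iff_of_nonpos
        (fun j _ => hterm_nonpos i j)).mp hout j (Finset.mem_univ j)
      by_contra hne
      have hneg := hlneg _ (hfl _ (huf i j)) hne
      have h1 : 0 < 1 / (c i * c j) := by
        have := hcpos i
        have := hcpos j
        positivity
      nlinarith
    have hwk : ∀ i j, w i j ∈ k := by
      intro i j
      have hq0 : q (w i j) = 0 := by
        apply Subtype.ext
        exact huL0 i j
      exact (Submodule.linearProjOfIsCompl_apply_eq_zero_iff hcompl.symm).mp hq0
    intro x hx y hy
    have hxval : x = ∑ i, v.repr ⟨x, hx⟩ i • ((v i : L)) := by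
      conv_lhs => rw [show x = ((⟨x, hx⟩ : ↥f) : L) from rfl, ← Module.Basis.sum_repr v ⟨x, hx⟩]
      simp only [AddSubmonoidClass.coe_finset_sum, SetLike.val_smul]
    have hyval : y = ∑ i, v.repr ⟨y, hy⟩ i • ((v i : L)) := by
      conv_lhs => rw [show y = ((⟨y, hy⟩ : ↥f) : L) from rfl, ← Module.Basis.sum_repr v ⟨y, hy⟩]
      simp only [AddSubmonoidClass.coe_finset_sum, SetLike.val_smul]
    have hlie1 : ∀ (a : Fin (Module.finrank ℝ ↥f) → ℝ) (Y : L),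
        ⁅(∑ i, a i • ((v i : L))), Y⁆ = ∑ i, a i • ⁅((v i : L)), Y⁆ := by
      intro a Y
      rw [sum_lie']
      exact Finset.sum_congr rfl fun i _ => by rw [smul_lie]
    have hlie2 : ∀ (b : Fin (Module.finrank ℝ ↥f) → ℝ) (X : L),
        ⁅X, (∑ j, b j • ((v j : L)))⁆ = ∑ j, b j • ⁅X, ((v j : L))⁆ := by
      intro b X
      rw [lie_sum']
      exact Finset.sum_congr rfl fun j _ => by rw [lie_smul]
    rw [hxval, hyval, hlie1]
    refine k.toSubmodule.sum_mem fun i _ => ?_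
    refine k.toSubmodule.smul_mem _ ?_
    rw [hlie2]
    refine k.toSubmodule.sum_mem fun j _ => ?_
    exact k.toSubmodule.smul_mem _ (hwk i j)
  · -- backward: construction
    intro hffk
    have hffk' : ∀ x ∈ f, ∀ y ∈ f, q ⁅x, y⁆ = 0 := fun x hx y hy =>
      hq_k0 _ (hffk x hx y hy)
    -- complementary submodules inside f ⊔ p
    set f₁ : Submodule ℝ ↥(f ⊔ p) := f.comap (f ⊔ p).subtype with hf₁def
    set p₁ : Submodule ℝ ↥(f ⊔ p) := p.comap (f ⊔ p).subtype with hp₁def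
    have hc₁ : IsCompl f₁ p₁ := by
      constructor
      · rw [disjoint_iff_inf_le]
        rintro x ⟨hx1, hx2⟩
        have : (x : L) = 0 := hfp0 _ hx1 hx2
        exact (Submodule.mem_bot ℝ).mpr (Subtype.ext this)
      · rw [codisjoint_iff_le_sup]
        rintro x -
        obtain ⟨s, hs, t, ht, hst⟩ := Submodule.mem_sup.mp x.2
        have hsm : s ∈ f ⊔ p := Submodule.mem_sup_left hs
        have htm : t ∈ f ⊔ p := Submodule.mem_sup_right ht
        refine Submodule.mem_sup.mpr ⟨⟨s, hsm⟩, hs, ⟨t, htm⟩, ht, ?_⟩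
        exact Subtype.ext hst
    set Pf : ↥(f ⊔ p) →ₗ[ℝ] L :=
      (f ⊔ p).subtype ∘ₗ f₁.subtype ∘ₗ f₁.linearProjOfIsCompl p₁ hc₁ with hPfdef
    set Pp : ↥(f ⊔ p) →ₗ[ℝ] L :=
      (f ⊔ p).subtype ∘ₗ p₁.subtype ∘ₗ p₁.linearProjOfIsCompl f₁ hc₁.symm with hPpdef
    have hPf_mem : ∀ u : ↥(f ⊔ p), Pf u ∈ f := fun u => (f₁.linearProjOfIsCompl p₁ hc₁ u).2
    have hPp_mem : ∀ u : ↥(f ⊔ p), Pp u ∈ p := fun u =>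
      (p₁.linearProjOfIsCompl f₁ hc₁.symm u).2
    have hPsum : ∀ u : ↥(f ⊔ p), Pf u + Pp u = (u : L) := by
      intro u
      have h := Submodule.projection_add_projection_eq_self hc₁ u
      exact congrArg Subtype.val h
    have hdecomp : ∀ (u : ↥(f ⊔ p)) (s t : L), s ∈ f → t ∈ p → (u : L) = s + t →
        Pf u = s ∧ Pp u = t := by
      intro u s t hs ht hu
      have h1 : Pf u - s = t - Pp u := by
        have h2 := hPsum u
        rw [hu] at h2
        rw [sub_eq_sub_iff_add_eq_add]
        exact h2.trans (add_comm s t)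
      have hmf : Pf u - s ∈ f := sub_mem (hPf_mem u) hs
      have hmp : Pf u - s ∈ p := h1 ▸ sub_mem ht (hPp_mem u)
      have h0 : Pf u - s = 0 := hfp0 _ hmf hmp
      constructor
      · rw [← sub_eq_zero]; exact h0
      · have : t - Pp u = 0 := h1 ▸ h0
        rw [← sub_eq_zero, ← neg_sub, this, neg_zero]
    have hPf_f : ∀ (u : ↥(f ⊔ p)), (u : L) ∈ f → Pf u = (u : L) ∧ Pp u = 0 := by
      intro u hu
      have := hdecomp u (u : L) 0 hu (zero_mem p) (by rw [add_zero])
      exact this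
    have hPf_p : ∀ (u : ↥(f ⊔ p)), (u : L) ∈ p → Pf u = 0 ∧ Pp u = (u : L) := by
      intro u hu
      have := hdecomp u 0 (u : L) (zero_mem f) hu (by rw [zero_add])
      exact this
    refine ⟨B.compl₁₂ Pp Pp - (2 : ℝ) • B.compl₁₂ Pf Pf, ?_, ?_, ?_, ?_, ?_⟩
    all_goals
      simp only [LinearMap.sub_apply, LinearMap.smul_apply, LinearMap.compl₁₂_apply,
        smul_eq_mul]
    · intro x y
      rw [Bsymm (Pp x) (Pp y), Bsymm (Pf x) (Pf y)]
    · -- positivity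
      intro x hx
      have hf0 : B (Pf x) (Pf x) ≤ 0 := by
        rcases eq_or_ne (Pf x) 0 with h | h
        · rw [h]; simp
        · exact le_of_lt (hlneg _ (hfl _ (hPf_mem x)) h)
      have hp0 : 0 ≤ B (Pp x) (Pp x) := by
        rcases eq_or_ne (Pp x) 0 with h | h
        · rw [h]; simp
        · exact le_of_lt (hppos _ (hPp_mem x) h)
      have hne : Pf x ≠ 0 ∨ Pp x ≠ 0 := by
        by_contra hcon
        push_neg at hcon
        apply hx
        have := hPsum x
        rw [hcon.1, hcon.2, add_zero] at this
        exact Subtype.ext this.symm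
      rcases hne with h | h
      · have := hlneg _ (hfl _ (hPf_mem x)) h
        nlinarith
      · have := hppos _ (hPp_mem x) h
        nlinarith
    · -- f ⟂ p
      intro x y hx hy
      rw [(hPf_f x hx).2, (hPf_p y hy).1]
      simp
    · -- ad(k)-invariance
      intro c hc x y hx hy
      have hdx := hdecomp ⟨⁅c, (x : L)⁆, hx⟩ ⁅c, Pf x⁆ ⁅c, Pp x⁆
        (hkf_f c hc _ (hPf_mem x)) (hlp c (hkl hc) _ (hPp_mem x))
        (by show ⁅c, (x : L)⁆ = _; rw [← lie_add, hPsum x])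
      have hdy := hdecomp ⟨⁅c, (y : L)⁆, hy⟩ ⁅c, Pf y⁆ ⁅c, Pp y⁆
        (hkf_f c hc _ (hPf_mem y)) (hlp c (hkl hc) _ (hPp_mem y))
        (by show ⁅c, (y : L)⁆ = _; rw [← lie_add, hPsum y])
      rw [hdx.1, hdx.2, hdy.1, hdy.2]
      have e1 : B ⁅c, Pp x⁆ (Pp y) = - B (Pp x) ⁅c, Pp y⁆ := Bskew c (Pp x) (Pp y)
      have e2 : B ⁅c, Pf x⁆ (Pf y) = - B (Pf x) ⁅c, Pf y⁆ := Bskew c (Pf x) (Pf y)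
      rw [e1, e2]
      ring
    · -- cyclic condition
      intro X Y Z
      have hpp_p : ∀ U V : ↥(f ⊔ p), (⁅Pf U, Pp V⁆ + ⁅Pp U, Pf V⁆ : L) ∈ p := by
        intro U V
        refine add_mem (hlp _ (hfl _ (hPf_mem U)) _ (hPp_mem V)) ?_
        have : (⁅Pp U, Pf V⁆ : L) = - ⁅Pf V, Pp U⁆ := by rw [← lie_skew]
        rw [this]
        exact neg_mem (hlp _ (hfl _ (hPf_mem V)) _ (hPp_mem U))
      have key : ∀ U V W : ↥(f ⊔ p),
          B (Pp (q ⁅(U : L), (V : L)⁆)) (Pp W) - 2 * B (Pf (q ⁅(U : L), (V : L)⁆)) (Pf W)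
          = B ⁅Pf U, Pp V⁆ (Pp W) + B ⁅Pp U, Pf V⁆ (Pp W)
            - 2 * B ⁅Pp U, Pp V⁆ (Pf W) := by
        intro U V W
        have hab_l : (⁅Pp U, Pp V⁆ : L) ∈ l := hpp _ (hPp_mem U) _ (hPp_mem V)
        have hstep1 : ⁅(U : L), (V : L)⁆
            = ⁅Pf U, Pf V⁆ + ((⁅Pf U, Pp V⁆ + ⁅Pp U, Pf V⁆) + ⁅Pp U, Pp V⁆) := by
          conv_lhs => rw [← hPsum U, ← hPsum V]
          rw [add_lie, lie_add, lie_add]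
          abel
        have hstep2 : q ⁅(U : L), (V : L)⁆
            = q (⁅Pf U, Pp V⁆ + ⁅Pp U, Pf V⁆) + q ⁅Pp U, Pp V⁆ := by
          rw [hstep1, map_add, map_add, hffk' _ (hPf_mem U) _ (hPf_mem V), zero_add]
        have hmem : (⁅Pf U, Pp V⁆ + ⁅Pp U, Pf V⁆ : L) ∈ f ⊔ p :=
          Submodule.mem_sup_right (hpp_p U V)
        have hval : (q ⁅(U : L), (V : L)⁆ : L)
            = (q ⁅Pp U, Pp V⁆ : L) + (⁅Pf U, Pp V⁆ + ⁅Pp U, Pf V⁆) := by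
          rw [hstep2, hq_mem _ hmem, Submodule.coe_add]
          exact add_comm _ _
        have hd := hdecomp (q ⁅(U : L), (V : L)⁆) (q ⁅Pp U, Pp V⁆ : L)
          (⁅Pf U, Pp V⁆ + ⁅Pp U, Pf V⁆) (hq_f _ hab_l) (hpp_p U V) hval
        rw [hd.1, hd.2, map_add, LinearMap.add_apply,
          ← hBk_f _ (hq_f _ hab_l) _ (hPf_mem W)]
      rw [key X Y, key Y Z, key Z X]
      have r1 : B ⁅Pp X, Pp Y⁆ (Pf Z) = B ⁅Pp Y, Pf Z⁆ (Pp X) := by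
        rw [Binv, Bsymm]
      have r2 : B ⁅Pp Y, Pp Z⁆ (Pf X) = B ⁅Pp Z, Pf X⁆ (Pp Y) := by
        rw [Binv, Bsymm]
      have r3 : B ⁅Pp Z, Pp X⁆ (Pf Y) = B ⁅Pp X, Pf Y⁆ (Pp Z) := by
        rw [Binv, Bsymm]
      have r4 : B ⁅Pf X, Pp Y⁆ (Pp Z) = B ⁅Pp Y, Pp Z⁆ (Pf X) := by
        rw [Binv, Bsymm]
      have r5 : B ⁅Pf Y, Pp Z⁆ (Pp X) = B ⁅Pp Z, Pp X⁆ (Pf Y) := by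
        rw [Binv, Bsymm]
      have r6 : B ⁅Pf Z, Pp X⁆ (Pp Y) = B ⁅Pp X, Pp Y⁆ (Pf Z) := by
        rw [Binv, Bsymm]
      linarith
end

section
/- Let K be a compact topological group, V a finite-dimensional real vector space, and ρ : K → GL(V) a continuous representation. Let B be a ρ(K)-invariant nondegenerate symmetric bilinear form on V, and let V = 𝔣 ⊕ 𝔭 be a B-orthogonal direct sum decomposition into ρ(K)-invariant subspaces such that B is negative definite on 𝔣 and positive definite on 𝔭. Let ⟨·,·⟩ be a ρ(K)-invariant inner product on V with ⟨𝔣,𝔭⟩ = 0. Then there exist a direct sum decomposition V = V₁ ⊕ ⋯ ⊕ V_m into ρ(K)-invariant subspaces, each contained in 𝔣 or in 𝔭, which are pairwise orthogonal with respect to both ⟨·,·⟩ and B and on each of which K acts irreducibly, together with nonzero real numbers λ₁,…,λ_m such that ⟨x,y⟩ = λ_i B(x,y) for all x,y ∈ V_i, where λ_i < 0 whenever V_i ⊆ 𝔣 and λ_i > 0 whenever V_i ⊆ 𝔭. -/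
open Module Submodule

universe u v

open Module Submodule

section PSD
variable {V : Type*} [AddCommGroup V] [Module ℝ V]

lemma psd_diag_zero (D : V →ₗ[ℝ] V →ₗ[ℝ] ℝ) (hsymm : ∀ x y, D x y = D y x)
    (hpsd : ∀ x, 0 ≤ D x x) {x : V} (hx : D x x = 0) (y : V) : D x y = 0 := by
  have key : ∀ t : ℝ, 0 ≤ 2 * t * D x y + t ^ 2 * D y y := by
    intro t
    have h := hpsd (x + t • y)
    simp only [map_add, map_smul, LinearMap.add_apply, LinearMap.smul_apply, smul_eq_mul] at h
    rw [hx, hsymm y x] at h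
    nlinarith [h]
  have hsq : D x y ^ 2 ≤ 0 := by
    rcases eq_or_lt_of_le (hpsd y) with hb | hb
    · have h := key (- D x y)
      nlinarith [h, hb]
    · have h1 := key (- D x y / D y y)
      have h5 : 2 * (- D x y / D y y) * D x y + (- D x y / D y y) ^ 2 * D y y
          = -(D x y ^ 2) / D y y := by
        field_simp
        ring
      rw [h5] at h1
      have h6 := mul_nonneg h1 hb.le
      rw [div_mul_cancel₀ _ (ne_of_gt hb)] at h6
      linarith
  have := sq_nonneg (D x y)
  have h0 : D x y ^ 2 = 0 := le_antisymm hsq this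
  exact pow_eq_zero_iff two_ne_zero |>.1 h0

end PSD

open Module Submodule

section Ray
variable {V : Type*} [NormedAddCommGroup V] [NormedSpace ℝ V] [FiniteDimensional ℝ V]

lemma bilin_cont (D : V →ₗ[ℝ] V →ₗ[ℝ] ℝ) : Continuous fun x => D x x := by
  have hL : Continuous fun x : V => LinearMap.toContinuousLinearMap (D x) := by
    exact (LinearMap.toContinuousLinearMap.toLinearMap.comp D).continuous_of_finiteDimensional
  have := hL.clm_apply continuous_id
  simpa using this

lemma rayleigh_aux (Φ B : V →ₗ[ℝ] V →ₗ[ℝ] ℝ) (hΦsymm : ∀ x y, Φ x y = Φ y x)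
    (hΦpos : ∀ x : V, x ≠ 0 → 0 < Φ x x) (hBsymm : ∀ x y, B x y = B y x)
    {v : V} (hv : v ≠ 0) :
    ∃ (r : ℝ) (x : V), x ≠ 0 ∧ ∀ y, B x y = r * Φ x y := by
  -- uniform lower bound for Φ on the norm-sphere
  obtain ⟨c, hc, hlow⟩ : ∃ c > 0, ∀ x : V, c * ‖x‖ ^ 2 ≤ Φ x x := by
    have hcs : IsCompact (Metric.sphere (0:V) 1) := isCompact_sphere 0 1
    have hne : (Metric.sphere (0:V) 1).Nonempty := by
      refine ⟨‖v‖⁻¹ • v, ?_⟩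
      simp [norm_smul, inv_mul_cancel₀ (norm_ne_zero_iff.2 hv)]
    obtain ⟨x₁, hx₁, hmin⟩ := hcs.exists_isMinOn hne (bilin_cont Φ).continuousOn
    have hx₁n : ‖x₁‖ = 1 := by simpa using hx₁
    have hx₁0 : x₁ ≠ 0 := by intro h; rw [h] at hx₁n; simp at hx₁n
    refine ⟨Φ x₁ x₁, hΦpos x₁ hx₁0, fun x => ?_⟩
    rcases eq_or_ne x 0 with rfl | hx0
    · simp
    · have hxn : ‖x‖ ≠ 0 := norm_ne_zero_iff.2 hx0
      have hmem : ‖x‖⁻¹ • x ∈ Metric.sphere (0:V) 1 := by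
        simp [norm_smul, inv_mul_cancel₀ hxn]
      have h1 := hmin hmem
      simp only [Set.mem_setOf_eq, map_smul, LinearMap.smul_apply, smul_eq_mul] at h1
      have h2 : Φ x₁ x₁ ≤ ‖x‖⁻¹ * (‖x‖⁻¹ * Φ x x) := h1
      have h3 : 0 < ‖x‖ := lt_of_le_of_ne (norm_nonneg x) (Ne.symm hxn)
      have : 0 ≤ ‖x‖⁻¹ * (‖x‖⁻¹ * Φ x x) - Φ x₁ x₁ := by linarith
      have h4 := mul_nonneg (mul_pos h3 h3).le this
      have h5 : ‖x‖ * ‖x‖ * (‖x‖⁻¹ * (‖x‖⁻¹ * Φ x x) - Φ x₁ x₁)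
          = Φ x x - Φ x₁ x₁ * ‖x‖ ^ 2 := by
        field_simp
      rw [h5] at h4
      linarith
  -- the Φ-sphere is compact
  set S : Set V := {x | Φ x x = 1} with hSdef
  have hScl : IsClosed S := isClosed_eq (bilin_cont Φ) continuous_const
  have hSsub : S ⊆ Metric.closedBall 0 (Real.sqrt c⁻¹) := by
    intro x hx
    have hx1 : Φ x x = 1 := hx
    simp only [Metric.mem_closedBall, dist_zero_right]
    have h1 : c * ‖x‖ ^ 2 ≤ 1 := by rw [← hx1]; exact hlow x
    have h2 : ‖x‖ ^ 2 ≤ c⁻¹ := by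
      rw [← one_div]
      exact (le_div_iff₀ hc).2 (by linarith)
    have h3 := Real.sqrt_le_sqrt h2
    rwa [Real.sqrt_sq (norm_nonneg x)] at h3
  have hScomp : IsCompact S :=
    (isCompact_closedBall (0:V) _).of_isClosed_subset hScl hSsub
  have hnz : ∀ x : V, x ≠ 0 → (Real.sqrt (Φ x x))⁻¹ • x ∈ S := by
    intro x hx
    have hq : 0 < Φ x x := hΦpos x hx
    have hs : Real.sqrt (Φ x x) * Real.sqrt (Φ x x) = Φ x x := Real.mul_self_sqrt hq.le
    show Φ _ _ = 1
    simp only [map_smul, LinearMap.smul_apply, smul_eq_mul]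
    rw [← mul_assoc, ← mul_inv, hs]
    exact inv_mul_cancel₀ (ne_of_gt hq)
  have hSne : S.Nonempty := ⟨_, hnz v hv⟩
  obtain ⟨x₀, hx₀S, hmax⟩ := hScomp.exists_isMaxOn hSne (bilin_cont B).continuousOn
  set r := B x₀ x₀ with hrdef
  have hx₀1 : Φ x₀ x₀ = 1 := hx₀S
  have hx₀0 : x₀ ≠ 0 := by
    intro h
    rw [h] at hx₀1
    simp at hx₀1
  have hle : ∀ x : V, B x x ≤ r * Φ x x := by
    intro x
    rcases eq_or_ne x 0 with rfl | hx0
    · simp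
    · have hq : 0 < Φ x x := hΦpos x hx0
      set s := Real.sqrt (Φ x x) with hsd
      have hs : s * s = Φ x x := Real.mul_self_sqrt hq.le
      have hspos : 0 < s := Real.sqrt_pos.2 hq
      have h1 := hmax (hnz x hx0)
      simp only [Set.mem_setOf_eq, map_smul, LinearMap.smul_apply, smul_eq_mul] at h1
      have h2 : s⁻¹ * (s⁻¹ * B x x) ≤ r := h1
      have h3 := mul_le_mul_of_nonneg_left h2 hq.le
      have heq : Φ x x * (s⁻¹ * (s⁻¹ * B x x)) = B x x := by
        rw [← hs]; field_simp
      rw [heq] at h3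
      linarith
  set D : V →ₗ[ℝ] V →ₗ[ℝ] ℝ := r • Φ - B with hDdef
  have hDapp : ∀ x y, D x y = r * Φ x y - B x y := by
    intro x y
    simp [hDdef, smul_eq_mul]
  have hD := psd_diag_zero D
    (fun x y => by rw [hDapp, hDapp, hΦsymm x y, hBsymm x y])
    (fun x => by rw [hDapp]; linarith [hle x])
    (x := x₀)
    (by rw [hDapp, hx₀1]; ring)
  exact ⟨r, x₀, hx₀0, fun y => by have := hD y; rw [hDapp] at this; linarith⟩

end Ray


section Aux
variable {V : Type*} [AddCommGroup V] [Module ℝ V]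

lemma exists_minimal_invariant {K : Type*} [Group K] [FiniteDimensional ℝ V]
    (ρ : K →* Module.End ℝ V) (E : Submodule ℝ V) (hE : E ≠ ⊥)
    (hEinv : ∀ g : K, ∀ x ∈ E, ρ g x ∈ E) :
    ∃ W : Submodule ℝ V, W ≤ E ∧ W ≠ ⊥ ∧ (∀ g : K, ∀ x ∈ W, ρ g x ∈ W) ∧
      ∀ U : Submodule ℝ V, U ≤ W → (∀ g : K, ∀ x ∈ U, ρ g x ∈ U) → U = ⊥ ∨ U = W := by
  classical
  set S : Set ℕ := {n | ∃ W : Submodule ℝ V,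
    (W ≤ E ∧ W ≠ ⊥ ∧ (∀ g : K, ∀ x ∈ W, ρ g x ∈ W)) ∧ finrank ℝ W = n} with hSdef
  have hS : S.Nonempty := ⟨finrank ℝ E, E, ⟨le_rfl, hE, hEinv⟩, rfl⟩
  obtain ⟨W, ⟨hWE, hW0, hWinv⟩, hWrank⟩ := Nat.sInf_mem hS
  refine ⟨W, hWE, hW0, hWinv, fun U hUW hUinv => ?_⟩
  by_cases hU : U = ⊥
  · exact Or.inl hU
  · right
    have h1 : finrank ℝ W ≤ finrank ℝ U := by
      rw [hWrank]
      exact Nat.sInf_le ⟨U, ⟨hUW.trans hWE, hU, hUinv⟩, rfl⟩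
    exact Submodule.eq_of_le_of_finrank_le hUW h1

lemma independent_of_orthogonal (Φ : V →ₗ[ℝ] V →ₗ[ℝ] ℝ)
    (hΦpos : ∀ x : V, x ≠ 0 → 0 < Φ x x) {ι : Type*} (G : ι → Submodule ℝ V)
    (horth : ∀ i j, i ≠ j → ∀ x ∈ G i, ∀ y ∈ G j, Φ x y = 0) :
    iSupIndep G := by
  intro i
  rw [Submodule.disjoint_def]
  intro x hxi hxr
  have hle : (⨆ j, ⨆ _ : j ≠ i, G j) ≤ LinearMap.BilinForm.orthogonal Φ (G i) := by
    refine iSup_le fun j => iSup_le fun hji => ?_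
    intro y hy
    intro n hn
    exact horth i j (Ne.symm hji) n hn y hy
  have h2 := hle hxr
  by_contra hx0
  exact absurd (h2 x hxi) (ne_of_gt (hΦpos x hx0))

def resRho {K : Type*} [Group K] (ρ : K →* Module.End ℝ V)
    (W : Submodule ℝ V) (h : ∀ g : K, ∀ x ∈ W, ρ g x ∈ W) : K →* Module.End ℝ ↥W where
  toFun g := (ρ g).restrict (fun x hx => h g x hx)
  map_one' := by
    ext x
    simp [LinearMap.restrict_apply]
  map_mul' g₁ g₂ := by
    ext x
    simp [LinearMap.restrict_apply, Module.End.mul_apply]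

@[simp] lemma resRho_coe {K : Type*} [Group K] (ρ : K →* Module.End ℝ V)
    (W : Submodule ℝ V) (h : ∀ g : K, ∀ x ∈ W, ρ g x ∈ W) (g : K) (x : ↥W) :
    (resRho ρ W h g x : V) = ρ g (x : V) := rfl

/-- The conclusion of the decomposition theorem. -/
def Concl (K : Type*) [Group K] (V : Type*) [AddCommGroup V] [Module ℝ V]
    (ρ : K →* Module.End ℝ V) (B Φ : V →ₗ[ℝ] V →ₗ[ℝ] ℝ) (f p : Submodule ℝ V) : Prop :=
  ∃ (m : ℕ) (W : Fin m → Submodule ℝ V) (lam : Fin m → ℝ),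
    DirectSum.IsInternal W
    ∧ (∀ i, ∀ (g : K), ∀ x ∈ W i, ρ g x ∈ W i)
    ∧ (∀ i, W i ≤ f ∨ W i ≤ p)
    ∧ (∀ i j, i ≠ j → ∀ x ∈ W i, ∀ y ∈ W j, Φ x y = 0 ∧ B x y = 0)
    ∧ (∀ i, W i ≠ ⊥ ∧
        ∀ U : Submodule ℝ V, U ≤ W i → (∀ (g : K), ∀ x ∈ U, ρ g x ∈ U) →
          U = ⊥ ∨ U = W i)
    ∧ (∀ i, lam i ≠ 0)
    ∧ (∀ i, ∀ x ∈ W i, ∀ y ∈ W i, Φ x y = lam i * B x y)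
    ∧ (∀ i, W i ≤ f → lam i < 0)
    ∧ (∀ i, W i ≤ p → 0 < lam i)

lemma concl_trivial {K : Type*} [Group K] (hV : Subsingleton V)
    (ρ : K →* Module.End ℝ V) (B Φ : V →ₗ[ℝ] V →ₗ[ℝ] ℝ) (f p : Submodule ℝ V) :
    Concl K V ρ B Φ f p := by
  refine ⟨0, Fin.elim0, Fin.elim0, ?_, fun i => i.elim0, fun i => i.elim0,
    fun i => i.elim0, fun i => i.elim0, fun i => i.elim0, fun i => i.elim0,
    fun i => i.elim0, fun i => i.elim0⟩
  rw [DirectSum.isInternal_submodule_iff_iSupIndep_and_iSup_eq_top]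
  constructor
  · intro i
    exact i.elim0
  · rw [eq_top_iff]
    intro x _
    have : x = 0 := Subsingleton.elim x 0
    rw [this]
    exact zero_mem _

end Aux

lemma branch {K : Type u} [Group K] {V : Type v} [NormedAddCommGroup V] [NormedSpace ℝ V]
    [FiniteDimensional ℝ V] (n : ℕ)
    (ih : ∀ (V' : Type v) [NormedAddCommGroup V'] [NormedSpace ℝ V'] [FiniteDimensional ℝ V'],
      ∀ (ρ' : K →* Module.End ℝ V') (B' Φ' : V' →ₗ[ℝ] V' →ₗ[ℝ] ℝ) (f' p' : Submodule ℝ V'),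
      finrank ℝ V' ≤ n →
      (∀ x y : V', B' x y = B' y x) →
      (∀ (g : K) (x y : V'), B' (ρ' g x) (ρ' g y) = B' x y) →
      IsCompl f' p' →
      (∀ x ∈ f', ∀ y ∈ p', B' x y = 0) →
      (∀ (g : K), ∀ x ∈ f', ρ' g x ∈ f') →
      (∀ (g : K), ∀ x ∈ p', ρ' g x ∈ p') →
      (∀ x ∈ f', x ≠ 0 → B' x x < 0) →
      (∀ x ∈ p', x ≠ 0 → 0 < B' x x) →
      (∀ x y : V', Φ' x y = Φ' y x) →
      (∀ x : V', x ≠ 0 → 0 < Φ' x x) →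
      (∀ (g : K) (x y : V'), Φ' (ρ' g x) (ρ' g y) = Φ' x y) →
      (∀ x ∈ f', ∀ y ∈ p', Φ' x y = 0) →
      Concl K V' ρ' B' Φ' f' p')
    (ρ : K →* Module.End ℝ V) (B Φ : V →ₗ[ℝ] V →ₗ[ℝ] ℝ) (f p : Submodule ℝ V)
    (hrank : finrank ℝ V ≤ n + 1)
    (hBsymm : ∀ x y : V, B x y = B y x)
    (hBinv : ∀ (g : K) (x y : V), B (ρ g x) (ρ g y) = B x y)
    (hcompl : IsCompl f p)
    (horth : ∀ x ∈ f, ∀ y ∈ p, B x y = 0)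
    (hfinv : ∀ (g : K), ∀ x ∈ f, ρ g x ∈ f)
    (hpinv : ∀ (g : K), ∀ x ∈ p, ρ g x ∈ p)
    (hBf : ∀ x ∈ f, x ≠ 0 → B x x < 0)
    (hBp : ∀ x ∈ p, x ≠ 0 → 0 < B x x)
    (hΦsymm : ∀ x y : V, Φ x y = Φ y x)
    (hΦpos : ∀ x : V, x ≠ 0 → 0 < Φ x x)
    (hΦinv : ∀ (g : K) (x y : V), Φ (ρ g x) (ρ g y) = Φ x y)
    (hΦfp : ∀ x ∈ f, ∀ y ∈ p, Φ x y = 0)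
    (c c' : Submodule ℝ V)
    (hfc : (c = f ∧ c' = p) ∨ (c = p ∧ c' = f))
    (hc0 : c ≠ ⊥) :
    Concl K V ρ B Φ f p := by
  classical
  -- symmetric facts about c, c'
  have hcc' : IsCompl c c' := by
    rcases hfc with ⟨rfl, rfl⟩ | ⟨rfl, rfl⟩
    · exact hcompl
    · exact hcompl.symm
  have hBcc' : ∀ x ∈ c, ∀ y ∈ c', B x y = 0 := by
    rcases hfc with ⟨rfl, rfl⟩ | ⟨rfl, rfl⟩
    · exact horth
    · intro x hx y hy; rw [hBsymm]; exact horth y hy x hx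
  have hΦcc' : ∀ x ∈ c, ∀ y ∈ c', Φ x y = 0 := by
    rcases hfc with ⟨rfl, rfl⟩ | ⟨rfl, rfl⟩
    · exact hΦfp
    · intro x hx y hy; rw [hΦsymm]; exact hΦfp y hy x hx
  have hcinv : ∀ (g : K), ∀ x ∈ c, ρ g x ∈ c := by
    rcases hfc with ⟨rfl, rfl⟩ | ⟨rfl, rfl⟩
    · exact hfinv
    · exact hpinv
  have hcdef : ∀ x ∈ c, x ≠ 0 → B x x ≠ 0 := by
    rcases hfc with ⟨rfl, rfl⟩ | ⟨rfl, rfl⟩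
    · exact fun x hx h0 => ne_of_lt (hBf x hx h0)
    · exact fun x hx h0 => ne_of_gt (hBp x hx h0)
  -- the inverse trick
  have hGG : ∀ (g : K) (w : V), ρ g (ρ g⁻¹ w) = w := by
    intro g w
    rw [← Module.End.mul_apply, ← map_mul, mul_inv_cancel, map_one, Module.End.one_apply]
  -- Rayleigh quotient on c
  obtain ⟨v, hvc, hv0⟩ := (Submodule.ne_bot_iff c).1 hc0
  obtain ⟨r, xh, hxh0, heig⟩ := rayleigh_aux (LinearMap.BilinForm.restrict Φ c) (LinearMap.BilinForm.restrict B c)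
    (fun x y => hΦsymm x y)
    (fun x hx => hΦpos x (fun h => hx (Subtype.ext h)))
    (fun x y => hBsymm x y)
    (v := ⟨v, hvc⟩) (fun h => hv0 (congrArg Subtype.val h))
  set x₀ : V := (xh : V) with hx₀def
  have hx₀c : x₀ ∈ c := xh.2
  have hx₀0 : x₀ ≠ 0 := fun h => hxh0 (Subtype.ext h)
  have heig' : ∀ y ∈ c, B x₀ y = r * Φ x₀ y := fun y hy => heig ⟨y, hy⟩
  have hr0 : r ≠ 0 := by
    intro h
    rw [h] at heig'
    have := heig' x₀ hx₀c
    simp at this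
    exact hcdef x₀ hx₀c hx₀0 this
  -- the eigenspace E inside c
  set E : Submodule ℝ V :=
    { carrier := {x | x ∈ c ∧ ∀ y ∈ c, B x y = r * Φ x y}
      add_mem' := by
        rintro a b ⟨hac, ha⟩ ⟨hbc, hb⟩
        refine ⟨add_mem hac hbc, fun y hy => ?_⟩
        simp only [map_add, LinearMap.add_apply, ha y hy, hb y hy]
        ring
      zero_mem' := by
        refine ⟨zero_mem c, fun y hy => ?_⟩
        simp
      smul_mem' := by
        rintro t a ⟨hac, ha⟩
        refine ⟨smul_mem c t hac, fun y hy => ?_⟩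
        simp only [map_smul, LinearMap.smul_apply, smul_eq_mul, ha y hy]
        ring } with hEdef
  have hEc : E ≤ c := fun x hx => hx.1
  have hx₀E : x₀ ∈ E := ⟨hx₀c, heig'⟩
  have hE0 : E ≠ ⊥ := by
    intro h
    rw [h] at hx₀E
    exact hx₀0 hx₀E
  have hEinv : ∀ g : K, ∀ x ∈ E, ρ g x ∈ E := by
    rintro g x ⟨hxc, hx⟩
    refine ⟨hcinv g x hxc, fun y hy => ?_⟩
    have h1 : ρ g⁻¹ y ∈ c := hcinv g⁻¹ y hy
    calc B (ρ g x) y = B (ρ g x) (ρ g (ρ g⁻¹ y)) := by rw [hGG]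
      _ = B x (ρ g⁻¹ y) := hBinv g x _
      _ = r * Φ x (ρ g⁻¹ y) := hx _ h1
      _ = r * Φ (ρ g x) (ρ g (ρ g⁻¹ y)) := by rw [hΦinv]
      _ = r * Φ (ρ g x) y := by rw [hGG]
  have hEext : ∀ x ∈ E, ∀ y : V, B x y = r * Φ x y := by
    rintro x ⟨hxc, hx⟩ y
    have hy : y ∈ c ⊔ c' := by rw [hcc'.sup_eq_top]; trivial
    obtain ⟨a, ha, b, hb, rfl⟩ := Submodule.mem_sup.1 hy
    simp only [map_add]
    rw [hx a ha, hBcc' x hxc b hb, hΦcc' x hxc b hb]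
    ring
  -- minimal invariant subspace inside E
  obtain ⟨W, hWE, hWne, hWinv, hWmin⟩ := exists_minimal_invariant ρ E hE0 hEinv
  have hWc : W ≤ c := hWE.trans hEc
  have hWext : ∀ x ∈ W, ∀ y : V, B x y = r * Φ x y := fun x hx y => hEext x (hWE hx) y
  -- the orthogonal complement W''
  set W'' : Submodule ℝ V := LinearMap.BilinForm.orthogonal Φ W with hW''def
  have hmemW'' : ∀ y : V, y ∈ W'' ↔ ∀ w ∈ W, Φ w y = 0 := fun y => Iff.rfl
  have hWW'' : IsCompl W W'' := by
    apply LinearMap.BilinForm.isCompl_orthogonal_of_restrict_nondegenerate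
    · intro x y h
      rwa [hΦsymm]
    · refine (LinearMap.IsRefl.nondegenerate_iff_separatingLeft (fun x y h => by rw [← h]; exact hΦsymm y x)).2 ?_
      intro x hx
      by_contra h0
      have : (x : V) ≠ 0 := fun h => h0 (Subtype.ext h)
      have h1 := hx x
      exact absurd h1 (ne_of_gt (hΦpos _ this))
  have hW''inv : ∀ g : K, ∀ y ∈ W'', ρ g y ∈ W'' := by
    intro g y hy w hw
    show Φ w (ρ g y) = 0
    have h1 : ρ g⁻¹ w ∈ W := hWinv g⁻¹ w hw
    have : Φ w (ρ g y) = Φ (ρ g (ρ g⁻¹ w)) (ρ g y) := by rw [hGG]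
    rw [this, hΦinv]
    exact hy _ h1
  have horthWW'' : ∀ x ∈ W, ∀ y ∈ W'', Φ x y = 0 ∧ B x y = 0 := by
    intro x hx y hy
    have h1 : Φ x y = 0 := hy x hx
    exact ⟨h1, by rw [hWext x hx y, h1, mul_zero]⟩
  -- restrict everything to W''
  set ρs : K →* Module.End ℝ ↥W'' := resRho ρ W'' hW''inv with hρs
  set Bs : ↥W'' →ₗ[ℝ] ↥W'' →ₗ[ℝ] ℝ := LinearMap.BilinForm.restrict B W'' with hBsdef
  set Φs : ↥W'' →ₗ[ℝ] ↥W'' →ₗ[ℝ] ℝ := LinearMap.BilinForm.restrict Φ W'' with hΦsdef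
  set fs : Submodule ℝ ↥W'' := f.comap W''.subtype with hfsdef
  set ps : Submodule ℝ ↥W'' := p.comap W''.subtype with hpsdef
  have hWforp : W ≤ f ∨ W ≤ p := by
    rcases hfc with ⟨rfl, -⟩ | ⟨rfl, -⟩
    · exact Or.inl hWc
    · exact Or.inr hWc
  have hcompsplit : ∀ y : V, y ∈ W'' → ∃ a ∈ f, ∃ b ∈ p, a ∈ W'' ∧ b ∈ W'' ∧ y = a + b := by
    intro y hy
    have hy2 : y ∈ f ⊔ p := by rw [hcompl.sup_eq_top]; trivial
    obtain ⟨a, ha, b, hb, rfl⟩ := Submodule.mem_sup.1 hy2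
    rcases hWforp with hWf | hWp
    · have hbW : b ∈ W'' := fun w hw => hΦfp w (hWf hw) b hb
      have haW : a ∈ W'' := by
        have := Submodule.sub_mem W'' hy hbW
        simpa using this
      exact ⟨a, ha, b, hb, haW, hbW, rfl⟩
    · have haW : a ∈ W'' := by
        intro w hw
        show Φ w a = 0
        rw [hΦsymm]
        exact hΦfp a ha w (hWp hw)
      have hbW : b ∈ W'' := by
        have := Submodule.sub_mem W'' hy haW
        simpa using this
      exact ⟨a, ha, b, hb, haW, hbW, rfl⟩
  have hcomplS : IsCompl fs ps := by
    constructor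
    · rw [disjoint_iff_inf_le]
      rintro x ⟨hxf, hxp⟩
      have h1 : (x : V) ∈ f ⊓ p := ⟨hxf, hxp⟩
      rw [hcompl.inf_eq_bot] at h1
      have h2 : (x : V) = 0 := h1
      have : x = 0 := Subtype.ext h2
      simp [this]
    · rw [codisjoint_iff_le_sup]
      intro x _
      obtain ⟨a, ha, b, hb, haW, hbW, hxab⟩ := hcompsplit (x : V) x.2
      refine Submodule.mem_sup.2 ⟨⟨a, haW⟩, ha, ⟨b, hbW⟩, hb, ?_⟩
      exact Subtype.ext hxab.symm
  have hrankW : 0 < finrank ℝ ↥W := by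
    rcases Nat.eq_zero_or_pos (finrank ℝ ↥W) with h | h
    · exact absurd (Submodule.finrank_eq_zero.1 h) hWne
    · exact h
  have hranksum := Submodule.finrank_add_eq_of_isCompl hWW''
  have hrankS : finrank ℝ ↥W'' ≤ n := by omega
  obtain ⟨m, Wf, lam, hInt, hinvS, hfpS, hpairS, hirrS, hlamne, hlameq, -, -⟩ :=
    ih ↥W'' ρs Bs Φs fs ps hrankS
      (fun x y => hBsymm x y)
      (fun g x y => hBinv g (x : V) (y : V))
      hcomplS
      (fun x hx y hy => horth x hx y hy)
      (fun g x hx => hfinv g (x : V) hx)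
      (fun g x hx => hpinv g (x : V) hx)
      (fun x hx hx0 => hBf (x : V) hx fun h => hx0 (Subtype.ext h))
      (fun x hx hx0 => hBp (x : V) hx fun h => hx0 (Subtype.ext h))
      (fun x y => hΦsymm x y)
      (fun x hx0 => hΦpos (x : V) fun h => hx0 (Subtype.ext h))
      (fun g x y => hΦinv g (x : V) (y : V))
      (fun x hx y hy => hΦfp x hx y hy)
  set Wmap : Fin m → Submodule ℝ V := fun i => (Wf i).map W''.subtype with hWmapdef
  have hWmaple : ∀ i, Wmap i ≤ W'' := fun i => Submodule.map_subtype_le _ _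
  -- pairwise orthogonality
  have hpair0s : ∀ (j : Fin m), ∀ x ∈ W, ∀ y ∈ Wmap j, Φ x y = 0 ∧ B x y = 0 :=
    fun j x hx y hy => horthWW'' x hx y (hWmaple j hy)
  have hpairss : ∀ (i j : Fin m), i ≠ j → ∀ x ∈ Wmap i, ∀ y ∈ Wmap j,
      Φ x y = 0 ∧ B x y = 0 := by
    intro i j hij x hx y hy
    obtain ⟨x', hx', rfl⟩ := hx
    obtain ⟨y', hy', rfl⟩ := hy
    exact hpairS i j hij x' hx' y' hy'
  have hpair : ∀ i j, i ≠ j → ∀ x ∈ (Fin.cons W Wmap : Fin (m+1) → Submodule ℝ V) i, ∀ y ∈ (Fin.cons W Wmap : Fin (m+1) → Submodule ℝ V) j,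
      Φ x y = 0 ∧ B x y = 0 := by
    intro i j hij x hx y hy
    rcases Fin.eq_zero_or_eq_succ i with rfl | ⟨i', rfl⟩ <;>
      rcases Fin.eq_zero_or_eq_succ j with rfl | ⟨j', rfl⟩
    · exact absurd rfl hij
    · rw [Fin.cons_zero] at hx
      rw [Fin.cons_succ] at hy
      exact hpair0s j' x hx y hy
    · rw [Fin.cons_succ] at hx
      rw [Fin.cons_zero] at hy
      obtain ⟨h1, h2⟩ := hpair0s i' y hy x hx
      exact ⟨by rw [hΦsymm]; exact h1, by rw [hBsymm]; exact h2⟩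
    · rw [Fin.cons_succ] at hx hy
      refine hpairss i' j' (fun h => hij ?_) x hx y hy
      rw [h]
  -- remaining homogeneous facts
  have hGne : ∀ i : Fin (m + 1), (Fin.cons W Wmap : Fin (m+1) → Submodule ℝ V) i ≠ ⊥ := by
    intro i
    rcases Fin.eq_zero_or_eq_succ i with rfl | ⟨i', rfl⟩
    · rw [Fin.cons_zero]
      exact hWne
    · rw [Fin.cons_succ]
      obtain ⟨z, hz, hz0⟩ := (Submodule.ne_bot_iff _).1 (hirrS i').1
      refine (Submodule.ne_bot_iff _).2 ⟨(z : V), ⟨z, hz, rfl⟩, ?_⟩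
      exact fun h => hz0 (Subtype.ext h)
  have hGlam : ∀ i : Fin (m + 1), ∀ x ∈ (Fin.cons W Wmap : Fin (m+1) → Submodule ℝ V) i,
      ∀ y ∈ (Fin.cons W Wmap : Fin (m+1) → Submodule ℝ V) i,
      Φ x y = (Fin.cons r⁻¹ lam : Fin (m+1) → ℝ) i * B x y := by
    intro i x hx y hy
    rcases Fin.eq_zero_or_eq_succ i with rfl | ⟨i', rfl⟩
    · rw [Fin.cons_zero] at hx ⊢
      rw [Fin.cons_zero] at hy
      rw [hWext x hx y, inv_mul_cancel_left₀ hr0]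
    · rw [Fin.cons_succ] at hx hy ⊢
      obtain ⟨x', hx', rfl⟩ := hx
      obtain ⟨y', hy', rfl⟩ := hy
      exact hlameq i' x' hx' y' hy'
  refine ⟨m + 1, (Fin.cons W Wmap : Fin (m+1) → Submodule ℝ V), (Fin.cons r⁻¹ lam : Fin (m+1) → ℝ), ?_, ?_, ?_, hpair, ?_, ?_, hGlam, ?_, ?_⟩
  · -- internal direct sum
    rw [DirectSum.isInternal_submodule_iff_iSupIndep_and_iSup_eq_top]
    constructor
    · exact independent_of_orthogonal Φ hΦpos _
        (fun i j hij x hx y hy => (hpair i j hij x hx y hy).1)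
    · rw [eq_top_iff, ← hWW''.sup_eq_top]
      apply sup_le
      · have h1 := le_iSup (Fin.cons W Wmap : Fin (m+1) → Submodule ℝ V) 0
        rwa [Fin.cons_zero] at h1
      · have h1 : W'' = (⊤ : Submodule ℝ ↥W'').map W''.subtype :=
          (Submodule.map_subtype_top _).symm
        rw [h1, ← hInt.submodule_iSup_eq_top, Submodule.map_iSup]
        refine iSup_le fun i => ?_
        have h2 := le_iSup (Fin.cons W Wmap : Fin (m+1) → Submodule ℝ V) i.succ
        rw [Fin.cons_succ] at h2
        exact h2
  · -- invariance
    intro i g x hx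
    rcases Fin.eq_zero_or_eq_succ i with rfl | ⟨i', rfl⟩
    · rw [Fin.cons_zero] at hx ⊢
      exact hWinv g x hx
    · rw [Fin.cons_succ] at hx ⊢
      obtain ⟨x', hx', rfl⟩ := hx
      exact ⟨ρs g x', hinvS i' g x' hx', rfl⟩
  · -- contained in f or p
    intro i
    rcases Fin.eq_zero_or_eq_succ i with rfl | ⟨i', rfl⟩
    · rw [Fin.cons_zero]
      exact hWforp
    · rw [Fin.cons_succ]
      rcases hfpS i' with h | h
      · exact Or.inl ((Submodule.map_mono h).trans (Submodule.map_comap_le _ _))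
      · exact Or.inr ((Submodule.map_mono h).trans (Submodule.map_comap_le _ _))
  · -- nonzero and irreducible
    intro i
    refine ⟨hGne i, ?_⟩
    rcases Fin.eq_zero_or_eq_succ i with rfl | ⟨i', rfl⟩
    · intro U hU hUinv
      rw [Fin.cons_zero] at hU ⊢
      exact hWmin U hU hUinv
    · intro U hU hUinv
      rw [Fin.cons_succ] at hU ⊢
      have hUW'' : U ≤ W'' := hU.trans (Submodule.map_subtype_le _ _)
      set Us : Submodule ℝ ↥W'' := U.comap W''.subtype with hUsdef
      have hUsinv : ∀ g : K, ∀ x ∈ Us, ρs g x ∈ Us := by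
        intro g x hx
        show ρ g (x : V) ∈ U
        exact hUinv g (x : V) hx
      have hUsle : Us ≤ Wf i' := by
        intro x hx
        have h2 : (x : V) ∈ (Wf i').map W''.subtype := hU hx
        obtain ⟨y, hy, hyx⟩ := h2
        have : y = x := Subtype.ext hyx
        rwa [← this]
      rcases (hirrS i').2 Us hUsle hUsinv with h | h
      · left
        rw [eq_bot_iff]
        intro x hx
        have hxW : x ∈ W'' := hUW'' hx
        have h3 : (⟨x, hxW⟩ : ↥W'') ∈ Us := hx
        rw [h] at h3
        have h4 : (⟨x, hxW⟩ : ↥W'') = 0 := h3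
        simpa using congrArg Subtype.val h4
      · right
        apply le_antisymm hU
        intro y hy
        obtain ⟨y', hy', rfl⟩ := hy
        rw [← h] at hy'
        exact hy'
  · -- lam nonzero
    intro i
    rcases Fin.eq_zero_or_eq_succ i with rfl | ⟨i', rfl⟩
    · rw [Fin.cons_zero]
      exact inv_ne_zero hr0
    · rw [Fin.cons_succ]
      exact hlamne i'
  · -- sign on f
    intro i hif
    obtain ⟨z, hz, hz0⟩ := (Submodule.ne_bot_iff _).1 (hGne i)
    have h1 := hGlam i z hz z hz
    have h2 := hΦpos z hz0
    have h3 := hBf z (hif hz) hz0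
    have h4 : 0 < (Fin.cons r⁻¹ lam : Fin (m+1) → ℝ) i * B z z := h1 ▸ h2
    rcases mul_pos_iff.1 h4 with ⟨-, hB⟩ | ⟨ht, -⟩
    · exact absurd hB (asymm h3)
    · exact ht
  · -- sign on p
    intro i hip
    obtain ⟨z, hz, hz0⟩ := (Submodule.ne_bot_iff _).1 (hGne i)
    have h1 := hGlam i z hz z hz
    have h2 := hΦpos z hz0
    have h3 := hBp z (hip hz) hz0
    have h4 : 0 < (Fin.cons r⁻¹ lam : Fin (m+1) → ℝ) i * B z z := h1 ▸ h2
    rcases mul_pos_iff.1 h4 with ⟨ht, -⟩ | ⟨-, hB⟩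
    · exact ht
    · exact absurd h3 (asymm hB)


theorem auxmain {K : Type u} [Group K] (n : ℕ) :
    ∀ (V : Type v) [NormedAddCommGroup V] [NormedSpace ℝ V] [FiniteDimensional ℝ V],
    ∀ (ρ : K →* Module.End ℝ V) (B Φ : V →ₗ[ℝ] V →ₗ[ℝ] ℝ) (f p : Submodule ℝ V),
      Module.finrank ℝ V ≤ n →
      (∀ x y : V, B x y = B y x) →
      (∀ (g : K) (x y : V), B (ρ g x) (ρ g y) = B x y) →
      IsCompl f p →
      (∀ x ∈ f, ∀ y ∈ p, B x y = 0) →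
      (∀ (g : K), ∀ x ∈ f, ρ g x ∈ f) →
      (∀ (g : K), ∀ x ∈ p, ρ g x ∈ p) →
      (∀ x ∈ f, x ≠ 0 → B x x < 0) →
      (∀ x ∈ p, x ≠ 0 → 0 < B x x) →
      (∀ x y : V, Φ x y = Φ y x) →
      (∀ x : V, x ≠ 0 → 0 < Φ x x) →
      (∀ (g : K) (x y : V), Φ (ρ g x) (ρ g y) = Φ x y) →
      (∀ x ∈ f, ∀ y ∈ p, Φ x y = 0) →
      Concl K V ρ B Φ f p := by
  induction n with
  | zero =>
    intro V _ _ _ ρ B Φ f p hrank _ _ _ _ _ _ _ _ _ _ _ _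
    have h0 : Module.finrank ℝ V = 0 := Nat.le_zero.1 hrank
    have hsub : Subsingleton V := Module.finrank_zero_iff.1 h0
    exact concl_trivial hsub ρ B Φ f p
  | succ n ihn =>
    intro V _ _ _ ρ B Φ f p hrank hBsymm hBinv hcompl horth hfinv hpinv hBf hBp
      hΦsymm hΦpos hΦinv hΦfp
    by_cases hf : f = ⊥
    · by_cases hp : p = ⊥
      · have htop : (⊤ : Submodule ℝ V) = ⊥ := by
          rw [← hcompl.sup_eq_top, hf, hp, sup_bot_eq]
        have hz : ∀ x : V, x = 0 := fun x => by
          have : x ∈ (⊤ : Submodule ℝ V) := Submodule.mem_top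
          rw [htop] at this
          exact this
        have hsub : Subsingleton V := ⟨fun a b => by rw [hz a, hz b]⟩
        exact concl_trivial hsub ρ B Φ f p
      · exact branch n ihn ρ B Φ f p hrank hBsymm hBinv hcompl horth hfinv hpinv hBf hBp
          hΦsymm hΦpos hΦinv hΦfp p f (Or.inr ⟨rfl, rfl⟩) hp
    · exact branch n ihn ρ B Φ f p hrank hBsymm hBinv hcompl horth hfinv hpinv hBf hBp
        hΦsymm hΦpos hΦinv hΦfp f p (Or.inl ⟨rfl, rfl⟩) hf

/-- Lemma 4.1 of the paper: for a continuous representation `ρ` of a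
compact group `K` on a finite-dimensional real vector space `V` with a
`ρ(K)`-invariant nondegenerate symmetric bilinear form `B`, a `B`-orthogonal
invariant splitting `V = 𝔣 ⊕ 𝔭` with `B` negative definite on `𝔣` and positive
definite on `𝔭`, and a `ρ(K)`-invariant inner product `Φ` with `⟨𝔣,𝔭⟩ = 0`, the
space splits into irreducible invariant subspaces `V = V₁ ⊕ ⋯ ⊕ V_m`, pairwise
orthogonal for both `Φ` and `B`, each contained in `𝔣` or `𝔭`, on which
`Φ = λ_i B` with `λ_i < 0` on pieces in `𝔣` and `λ_i > 0` on pieces in `𝔭`. -/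
theorem stmt_5
    (K : Type*) [Group K] [TopologicalSpace K] [IsTopologicalGroup K] [CompactSpace K]
    (V : Type*) [NormedAddCommGroup V] [NormedSpace ℝ V] [FiniteDimensional ℝ V]
    (ρ : K →* (Module.End ℝ V))
    (hρcont : Continuous fun kx : K × V => ρ kx.1 kx.2)
    (B : V →ₗ[ℝ] V →ₗ[ℝ] ℝ)
    (hBsymm : ∀ x y : V, B x y = B y x)
    (hBnd : ∀ x : V, (∀ y : V, B x y = 0) → x = 0)
    (hBinv : ∀ (g : K) (x y : V), B (ρ g x) (ρ g y) = B x y)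
    (f p : Submodule ℝ V)
    (hcompl : IsCompl f p)
    (horth : ∀ x ∈ f, ∀ y ∈ p, B x y = 0)
    (hfinv : ∀ (g : K), ∀ x ∈ f, ρ g x ∈ f)
    (hpinv : ∀ (g : K), ∀ x ∈ p, ρ g x ∈ p)
    (hBf : ∀ x ∈ f, x ≠ 0 → B x x < 0)
    (hBp : ∀ x ∈ p, x ≠ 0 → 0 < B x x)
    (Φ : V →ₗ[ℝ] V →ₗ[ℝ] ℝ)
    (hΦsymm : ∀ x y : V, Φ x y = Φ y x)
    (hΦpos : ∀ x : V, x ≠ 0 → 0 < Φ x x)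
    (hΦinv : ∀ (g : K) (x y : V), Φ (ρ g x) (ρ g y) = Φ x y)
    (hΦfp : ∀ x ∈ f, ∀ y ∈ p, Φ x y = 0) :
    ∃ (m : ℕ) (W : Fin m → Submodule ℝ V) (lam : Fin m → ℝ),
      DirectSum.IsInternal W
      ∧ (∀ i, ∀ (g : K), ∀ x ∈ W i, ρ g x ∈ W i)
      ∧ (∀ i, W i ≤ f ∨ W i ≤ p)
      ∧ (∀ i j, i ≠ j → ∀ x ∈ W i, ∀ y ∈ W j, Φ x y = 0 ∧ B x y = 0)
      ∧ (∀ i, W i ≠ ⊥ ∧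
          ∀ U : Submodule ℝ V, U ≤ W i → (∀ (g : K), ∀ x ∈ U, ρ g x ∈ U) →
            U = ⊥ ∨ U = W i)
      ∧ (∀ i, lam i ≠ 0)
      ∧ (∀ i, ∀ x ∈ W i, ∀ y ∈ W i, Φ x y = lam i * B x y)
      ∧ (∀ i, W i ≤ f → lam i < 0)
      ∧ (∀ i, W i ≤ p → 0 < lam i) := by
  exact auxmain (Module.finrank ℝ V) V ρ B Φ f p le_rfl hBsymm hBinv hcompl horth hfinv
    hpinv hBf hBp hΦsymm hΦpos hΦinv hΦfp
end

section
/- Let a, b > 0 and consider the 2×2 real matrices X₁ = a·[[0,1],[1,0]], X₂ = b·[[1,0],[0,−1]], X₃ = (ab/√(a²+b²))·[[0,1],[−1,0]], which are trace-free, and set r = 2b²/√(a²+b²), s = 2a²/√(a²+b²), t = −2√(a²+b²). Then, with the commutator bracket ⁅X,Y⁆ = XY − YX: (i) ⁅X₂,X₃⁆ = r·X₁, ⁅X₃,X₁⁆ = s·X₂, ⁅X₁,X₂⁆ = t·X₃ and r + s + t = 0; (ii) (X₁,X₂,X₃) is a basis of the Lie algebra 𝔰𝔩(2,ℝ) of trace-free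 2×2 real matrices; (iii) the inner product ⟨·,·⟩ on 𝔰𝔩(2,ℝ) making (X₁,X₂,X₃) orthonormal satisfies ⟨⁅X,Y⁆,Z⟩ + ⟨⁅Y,Z⁆,X⟩ + ⟨⁅Z,X⁆,Y⟩ = 0 for all X,Y,Z ∈ 𝔰𝔩(2,ℝ); and (iv) trace(ad X) = 0 for every X ∈ 𝔰𝔩(2,ℝ). -/
attribute [local instance 100] LieRing.ofAssociativeRing

private lemma stmt11_br23 (a b r : ℝ) (ha : 0 < a) (hb : 0 < b)
    (hr : r = 2 * b ^ 2 / Real.sqrt (a ^ 2 + b ^ 2)) :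
    ⁅b • (!![1, 0; 0, -1] : Matrix (Fin 2) (Fin 2) ℝ),
      (a * b / Real.sqrt (a ^ 2 + b ^ 2)) • (!![0, 1; -1, 0] : Matrix (Fin 2) (Fin 2) ℝ)⁆
      = r • (a • (!![0, 1; 1, 0] : Matrix (Fin 2) (Fin 2) ℝ)) := by
  have hc : (0:ℝ) < Real.sqrt (a ^ 2 + b ^ 2) := Real.sqrt_pos.2 (by positivity)
  rw [Ring.lie_def]
  ext i j
  fin_cases i <;> fin_cases j <;>
    simp [hr, Matrix.smul_mul, Matrix.mul_smul, Matrix.mul_fin_two] <;>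
    field_simp <;> ring

private lemma stmt11_br31 (a b s : ℝ) (ha : 0 < a) (hb : 0 < b)
    (hs : s = 2 * a ^ 2 / Real.sqrt (a ^ 2 + b ^ 2)) :
    ⁅(a * b / Real.sqrt (a ^ 2 + b ^ 2)) • (!![0, 1; -1, 0] : Matrix (Fin 2) (Fin 2) ℝ),
      a • (!![0, 1; 1, 0] : Matrix (Fin 2) (Fin 2) ℝ)⁆
      = s • (b • (!![1, 0; 0, -1] : Matrix (Fin 2) (Fin 2) ℝ)) := by
  have hc : (0:ℝ) < Real.sqrt (a ^ 2 + b ^ 2) := Real.sqrt_pos.2 (by positivity)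
  have hc2 : Real.sqrt (a ^ 2 + b ^ 2) * Real.sqrt (a ^ 2 + b ^ 2) = a ^ 2 + b ^ 2 :=
    Real.mul_self_sqrt (by positivity)
  rw [Ring.lie_def]
  ext i j
  fin_cases i <;> fin_cases j <;>
    simp [hs, Matrix.smul_mul, Matrix.mul_smul, Matrix.mul_fin_two] <;>
    field_simp <;>
    first
      | ring1
      | linear_combination (-2 * a ^ 2 * b) * hc2
      | linear_combination (2 * a ^ 2 * b) * hc2

private lemma stmt11_br12 (a b t : ℝ) (ha : 0 < a) (hb : 0 < b)
    (ht : t = -2 * Real.sqrt (a ^ 2 + b ^ 2)) :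
    ⁅a • (!![0, 1; 1, 0] : Matrix (Fin 2) (Fin 2) ℝ),
      b • (!![1, 0; 0, -1] : Matrix (Fin 2) (Fin 2) ℝ)⁆
      = t • ((a * b / Real.sqrt (a ^ 2 + b ^ 2)) • (!![0, 1; -1, 0] : Matrix (Fin 2) (Fin 2) ℝ)) := by
  have hc : (0:ℝ) < Real.sqrt (a ^ 2 + b ^ 2) := Real.sqrt_pos.2 (by positivity)
  have hc2 : Real.sqrt (a ^ 2 + b ^ 2) * Real.sqrt (a ^ 2 + b ^ 2) = a ^ 2 + b ^ 2 :=
    Real.mul_self_sqrt (by positivity)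
  rw [Ring.lie_def]
  ext i j
  fin_cases i <;> fin_cases j <;>
    simp [ht, Matrix.smul_mul, Matrix.mul_smul, Matrix.mul_fin_two] <;>
    field_simp <;>
    first
      | ring1
      | linear_combination (2 * a * b) * hc2
      | linear_combination (-2 * a * b) * hc2

private lemma stmt11_rep (a b : ℝ) (ha : 0 < a) (hb : 0 < b)
    (X1 X2 X3 : Matrix (Fin 2) (Fin 2) ℝ)
    (hX1 : X1 = a • !![0, 1; 1, 0])
    (hX2 : X2 = b • !![1, 0; 0, -1])
    (hX3 : X3 = (a * b / Real.sqrt (a ^ 2 + b ^ 2)) • !![0, 1; -1, 0])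
    (M : Matrix (Fin 2) (Fin 2) ℝ) (hM : M.trace = 0) :
    M = ((M 0 1 + M 1 0) / (2 * a)) • X1 + (M 0 0 / b) • X2
        + (Real.sqrt (a ^ 2 + b ^ 2) * (M 0 1 - M 1 0) / (2 * (a * b))) • X3 := by
  have hc : (0:ℝ) < Real.sqrt (a ^ 2 + b ^ 2) := Real.sqrt_pos.2 (by positivity)
  rw [Matrix.trace_fin_two] at hM
  have h11 : M 1 1 = -(M 0 0) := by linarith
  ext i j
  fin_cases i <;> fin_cases j <;>
    simp only [hX1, hX2, hX3, h11, Matrix.add_apply, Matrix.smul_apply,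
      Matrix.cons_val', Matrix.cons_val_zero, Matrix.cons_val_one, Matrix.head_cons,
      Matrix.empty_val', Matrix.cons_val_fin_one, Matrix.head_fin_const, Fin.isValue,
      Matrix.of_apply, smul_eq_mul, Fin.zero_eta, Fin.mk_one] <;>
    field_simp <;> ring

private lemma stmt11_cyclic (X1 X2 X3 : Matrix (Fin 2) (Fin 2) ℝ)
    (r s t : ℝ) (hsum : r + s + t = 0)
    (h23 : ⁅X2, X3⁆ = r • X1) (h31 : ⁅X3, X1⁆ = s • X2) (h12 : ⁅X1, X2⁆ = t • X3)
    (Φ : Matrix (Fin 2) (Fin 2) ℝ →ₗ[ℝ] Matrix (Fin 2) (Fin 2) ℝ →ₗ[ℝ] ℝ)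
    (e11 : Φ X1 X1 = 1) (e12 : Φ X1 X2 = 0) (e13 : Φ X1 X3 = 0)
    (e21 : Φ X2 X1 = 0) (e22 : Φ X2 X2 = 1) (e23 : Φ X2 X3 = 0)
    (e31 : Φ X3 X1 = 0) (e32 : Φ X3 X2 = 0) (e33 : Φ X3 X3 = 1)
    (α₁ α₂ α₃ β₁ β₂ β₃ γ₁ γ₂ γ₃ : ℝ) :
    Φ ⁅α₁ • X1 + α₂ • X2 + α₃ • X3, β₁ • X1 + β₂ • X2 + β₃ • X3⁆
        (γ₁ • X1 + γ₂ • X2 + γ₃ • X3)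
    + Φ ⁅β₁ • X1 + β₂ • X2 + β₃ • X3, γ₁ • X1 + γ₂ • X2 + γ₃ • X3⁆
        (α₁ • X1 + α₂ • X2 + α₃ • X3)
    + Φ ⁅γ₁ • X1 + γ₂ • X2 + γ₃ • X3, α₁ • X1 + α₂ • X2 + α₃ • X3⁆
        (β₁ • X1 + β₂ • X2 + β₃ • X3) = 0 := by
  have h32 : ⁅X3, X2⁆ = (-r) • X1 := by rw [← lie_skew, h23]; module
  have h13 : ⁅X1, X3⁆ = (-s) • X2 := by rw [← lie_skew, h31]; module
  have h21 : ⁅X2, X1⁆ = (-t) • X3 := by rw [← lie_skew, h12]; module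
  have ht' : t = -r - s := by linarith
  simp only [lie_add, add_lie, lie_smul, smul_lie, lie_self, smul_zero, zero_add, add_zero,
    h23, h31, h12, h32, h13, h21, smul_smul, map_add, map_smul, LinearMap.add_apply,
    LinearMap.smul_apply, e11, e12, e13, e21, e22, e23, e31, e32, e33, smul_eq_mul,
    mul_one, mul_zero, ht']
  ring

private lemma stmt11_ad (X1 X2 X3 : Matrix (Fin 2) (Fin 2) ℝ) (r s t : ℝ)
    (hrne : r ≠ 0) (hsne : s ≠ 0) (htne : t ≠ 0)
    (h23 : ⁅X2, X3⁆ = r • X1) (h31 : ⁅X3, X1⁆ = s • X2) (h12 : ⁅X1, X2⁆ = t • X3)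
    (m1 : X1 ∈ LieAlgebra.SpecialLinear.sl (Fin 2) ℝ)
    (m2 : X2 ∈ LieAlgebra.SpecialLinear.sl (Fin 2) ℝ)
    (m3 : X3 ∈ LieAlgebra.SpecialLinear.sl (Fin 2) ℝ)
    (rep : ∀ M : Matrix (Fin 2) (Fin 2) ℝ, M.trace = 0 →
      ∃ α β γ : ℝ, M = α • X1 + β • X2 + γ • X3)
    (x : ↥(LieAlgebra.SpecialLinear.sl (Fin 2) ℝ)) :
    LinearMap.trace ℝ ↥(LieAlgebra.SpecialLinear.sl (Fin 2) ℝ)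
      (LieAlgebra.ad ℝ ↥(LieAlgebra.SpecialLinear.sl (Fin 2) ℝ) x) = 0 := by
  have key : ∀ y z : ↥(LieAlgebra.SpecialLinear.sl (Fin 2) ℝ),
      LinearMap.trace ℝ _ (LieAlgebra.ad ℝ ↥(LieAlgebra.SpecialLinear.sl (Fin 2) ℝ) ⁅y, z⁆) = 0 := by
    intro y z
    rw [LieHom.map_lie, Ring.lie_def, map_sub, LinearMap.trace_mul_comm, sub_self]
  set E1 : ↥(LieAlgebra.SpecialLinear.sl (Fin 2) ℝ) := ⟨X1, m1⟩ with hE1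
  set E2 : ↥(LieAlgebra.SpecialLinear.sl (Fin 2) ℝ) := ⟨X2, m2⟩ with hE2
  set E3 : ↥(LieAlgebra.SpecialLinear.sl (Fin 2) ℝ) := ⟨X3, m3⟩ with hE3
  have b1 : E1 = r⁻¹ • ⁅E2, E3⁆ := by
    apply Subtype.ext
    show X1 = r⁻¹ • (↑(⁅E2, E3⁆ : ↥(LieAlgebra.SpecialLinear.sl (Fin 2) ℝ)) :
      Matrix (Fin 2) (Fin 2) ℝ)
    rw [LieSubalgebra.coe_bracket, hE2, hE3]
    show X1 = r⁻¹ • ⁅X2, X3⁆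
    rw [h23, smul_smul, inv_mul_cancel₀ hrne, one_smul]
  have b2 : E2 = s⁻¹ • ⁅E3, E1⁆ := by
    apply Subtype.ext
    show X2 = s⁻¹ • (↑(⁅E3, E1⁆ : ↥(LieAlgebra.SpecialLinear.sl (Fin 2) ℝ)) :
      Matrix (Fin 2) (Fin 2) ℝ)
    rw [LieSubalgebra.coe_bracket, hE3, hE1]
    show X2 = s⁻¹ • ⁅X3, X1⁆
    rw [h31, smul_smul, inv_mul_cancel₀ hsne, one_smul]
  have b3 : E3 = t⁻¹ • ⁅E1, E2⁆ := by
    apply Subtype.ext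
    show X3 = t⁻¹ • (↑(⁅E1, E2⁆ : ↥(LieAlgebra.SpecialLinear.sl (Fin 2) ℝ)) :
      Matrix (Fin 2) (Fin 2) ℝ)
    rw [LieSubalgebra.coe_bracket, hE1, hE2]
    show X3 = t⁻¹ • ⁅X1, X2⁆
    rw [h12, smul_smul, inv_mul_cancel₀ htne, one_smul]
  obtain ⟨α, β, γ, hval⟩ := rep x.1 x.2
  have hx : x = α • E1 + β • E2 + γ • E3 := Subtype.ext hval
  rw [hx, b1, b2, b3, smul_smul, smul_smul, smul_smul]
  simp only [map_add, map_smul, key, smul_eq_mul, mul_zero, add_zero]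



open LieAlgebra.SpecialLinear in
/-- the verification of Section 6 of the paper for
`𝔰𝔩(2,ℝ)` (the Lie algebra of trace-free 2×2 real matrices, i.e. of the
universal cover of `SL(2,ℝ)`): the matrices `X₁, X₂, X₃` are trace-free, satisfy
`⁅X₂,X₃⁆ = r X₁`, `⁅X₃,X₁⁆ = s X₂`, `⁅X₁,X₂⁆ = t X₃` with `r + s + t = 0`, form
a basis of `𝔰𝔩(2,ℝ)`, the inner product making them orthonormal satisfies the
cyclic condition, and `trace (ad X) = 0` for every `X ∈ 𝔰𝔩(2,ℝ)`. -/
theorem stmt_11 (a b : ℝ) (ha : 0 < a) (hb : 0 < b)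
    (X1 X2 X3 : Matrix (Fin 2) (Fin 2) ℝ)
    (hX1 : X1 = a • !![0, 1; 1, 0])
    (hX2 : X2 = b • !![1, 0; 0, -1])
    (hX3 : X3 = (a * b / Real.sqrt (a ^ 2 + b ^ 2)) • !![0, 1; -1, 0])
    (r s t : ℝ)
    (hr : r = 2 * b ^ 2 / Real.sqrt (a ^ 2 + b ^ 2))
    (hs : s = 2 * a ^ 2 / Real.sqrt (a ^ 2 + b ^ 2))
    (ht : t = -2 * Real.sqrt (a ^ 2 + b ^ 2))
    (Φ : Matrix (Fin 2) (Fin 2) ℝ →ₗ[ℝ] Matrix (Fin 2) (Fin 2) ℝ →ₗ[ℝ] ℝ)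
    (hΦ : ∀ i j : Fin 3, Φ (![X1, X2, X3] i) (![X1, X2, X3] j)
            = if i = j then 1 else 0) :
    -- the matrices are trace-free
    (X1.trace = 0 ∧ X2.trace = 0 ∧ X3.trace = 0)
    -- (i) bracket relations
    ∧ (⁅X2, X3⁆ = r • X1 ∧ ⁅X3, X1⁆ = s • X2 ∧ ⁅X1, X2⁆ = t • X3 ∧ r + s + t = 0)
    -- (ii) basis of 𝔰𝔩(2,ℝ)
    ∧ (LinearIndependent ℝ ![X1, X2, X3]
        ∧ Submodule.span ℝ {X1, X2, X3} = (sl (Fin 2) ℝ).toSubmodule)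
    -- (iii) cyclic condition
    ∧ (∀ X ∈ sl (Fin 2) ℝ, ∀ Y ∈ sl (Fin 2) ℝ, ∀ Z ∈ sl (Fin 2) ℝ,
        Φ ⁅X, Y⁆ Z + Φ ⁅Y, Z⁆ X + Φ ⁅Z, X⁆ Y = 0)
    -- (iv) tr (ad X) = 0
    ∧ (∀ x : ↥(sl (Fin 2) ℝ),
        LinearMap.trace ℝ ↥(sl (Fin 2) ℝ) (LieAlgebra.ad ℝ ↥(sl (Fin 2) ℝ) x) = 0) := by
  have hc : (0:ℝ) < Real.sqrt (a ^ 2 + b ^ 2) := Real.sqrt_pos.2 (by positivity)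
  have hc2 : Real.sqrt (a ^ 2 + b ^ 2) * Real.sqrt (a ^ 2 + b ^ 2) = a ^ 2 + b ^ 2 :=
    Real.mul_self_sqrt (by positivity)
  have tr1 : X1.trace = 0 := by simp [hX1, Matrix.trace_fin_two]
  have tr2 : X2.trace = 0 := by simp [hX2, Matrix.trace_fin_two]
  have tr3 : X3.trace = 0 := by simp [hX3, Matrix.trace_fin_two]
  have h23 : ⁅X2, X3⁆ = r • X1 := by
    rw [hX1, hX2, hX3]; exact stmt11_br23 a b r ha hb hr
  have h31 : ⁅X3, X1⁆ = s • X2 := by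
    rw [hX1, hX2, hX3]; exact stmt11_br31 a b s ha hb hs
  have h12 : ⁅X1, X2⁆ = t • X3 := by
    rw [hX1, hX2, hX3]; exact stmt11_br12 a b t ha hb ht
  have hsum : r + s + t = 0 := by
    rw [hr, hs, ht]; field_simp; nlinarith [hc2]
  have rep := stmt11_rep a b ha hb X1 X2 X3 hX1 hX2 hX3
  -- linear independence
  have lin : LinearIndependent ℝ ![X1, X2, X3] := by
    rw [Fintype.linearIndependent_iff]
    intro g hg j
    have h := congrArg (fun M => Φ M (![X1, X2, X3] j)) hg
    simp only [map_sum, map_smul, LinearMap.sum_apply, LinearMap.smul_apply, hΦ,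
      map_zero, LinearMap.zero_apply, smul_eq_mul, mul_ite, mul_one, mul_zero,
      Finset.sum_ite_eq', Finset.mem_univ, if_true] at h
    exact h
  -- span
  have spn : Submodule.span ℝ {X1, X2, X3} = (sl (Fin 2) ℝ).toSubmodule := by
    apply le_antisymm
    · rw [Submodule.span_le]
      rintro M (rfl | rfl | rfl) <;> assumption
    · intro M hM
      have hM' : M.trace = 0 := hM
      rw [rep M hM']
      refine add_mem (add_mem ?_ ?_) ?_ <;>
        exact Submodule.smul_mem _ _ (Submodule.subset_span (by simp))
  have e11 : Φ X1 X1 = 1 := by simpa using hΦ 0 0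
  have e12 : Φ X1 X2 = 0 := by simpa using hΦ 0 1
  have e13 : Φ X1 X3 = 0 := by simpa using hΦ 0 2
  have e21 : Φ X2 X1 = 0 := by simpa using hΦ 1 0
  have e22 : Φ X2 X2 = 1 := by simpa using hΦ 1 1
  have e23 : Φ X2 X3 = 0 := by simpa using hΦ 1 2
  have e31 : Φ X3 X1 = 0 := by simpa using hΦ 2 0
  have e32 : Φ X3 X2 = 0 := by simpa using hΦ 2 1
  have e33 : Φ X3 X3 = 1 := by simpa using hΦ 2 2
  refine ⟨⟨tr1, tr2, tr3⟩, ⟨h23, h31, h12, hsum⟩, ⟨lin, spn⟩, ?_, ?_⟩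
  · intro X hX Y hY Z hZ
    obtain ⟨α₁, α₂, α₃, rfl⟩ : ∃ α₁ α₂ α₃, X = α₁ • X1 + α₂ • X2 + α₃ • X3 :=
      ⟨_, _, _, rep X hX⟩
    obtain ⟨β₁, β₂, β₃, rfl⟩ : ∃ β₁ β₂ β₃, Y = β₁ • X1 + β₂ • X2 + β₃ • X3 :=
      ⟨_, _, _, rep Y hY⟩
    obtain ⟨γ₁, γ₂, γ₃, rfl⟩ : ∃ γ₁ γ₂ γ₃, Z = γ₁ • X1 + γ₂ • X2 + γ₃ • X3 :=
      ⟨_, _, _, rep Z hZ⟩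
    exact stmt11_cyclic X1 X2 X3 r s t hsum h23 h31 h12 Φ
      e11 e12 e13 e21 e22 e23 e31 e32 e33 _ _ _ _ _ _ _ _ _
  · intro x
    have hrne : r ≠ 0 := by rw [hr]; positivity
    have hsne : s ≠ 0 := by rw [hs]; positivity
    have htne : t ≠ 0 := by rw [ht]; intro h; nlinarith
    exact stmt11_ad X1 X2 X3 r s t hrne hsne htne h23 h31 h12 tr1 tr2 tr3
      (fun M hM => ⟨_, _, _, rep M hM⟩) x
end
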